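/- arXiv:2002.10639 — 7 statements merged into one kernel-verified Lean document; each statement's English description precedes it below -/
import Mathlib

section
/- The free product of n copies of the single-edge graph T₁ (one edge on two vertices) is a tree that is regular of degree n. -/
variable {ι : Type} [DecidableEq ι]

abbrev Letter (V : ι → Type) := Σ i, V i

def upd {V : ι → Type} (u : ∀ i, V i) : List (Letter V) → ∀ i, V i
  | [] => u
  | ⟨j, x⟩ :: w => Function.update (upd u w) j x

def Adm {V : ι → Type} (u : ∀ i, V i) (w : List (Letter V)) : Prop :=
  w.Chain' (fun a b => a.1 ≠ b.1) ∧
    ∀ (a : Letter V) (p : List (Letter V)), a :: p <:+ w → a.2 ≠ upd u p a.1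

def Word {V : ι → Type} (u : ∀ i, V i) := {w : List (Letter V) // Adm u w}

def emptyWord {V : ι → Type} (u : ∀ i, V i) : Word u :=
  ⟨[], List.isChain_nil, by intro a p h; simp at h⟩

def Pre {V : ι → Type} (G : ∀ i, SimpleGraph (V i)) (u : ∀ i, V i)
    (v w : List (Letter V)) : Prop :=
  (∃ (p : List (Letter V)) (j : ι) (a b : V j),
      (G j).Adj a b ∧ v = ⟨j, a⟩ :: p ∧ w = ⟨j, b⟩ :: p) ∨
  (∃ (j : ι) (a : V j), (G j).Adj (upd u v j) a ∧ w = ⟨j, a⟩ :: v)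

def freeProd {V : ι → Type} (G : ∀ i, SimpleGraph (V i)) (u : ∀ i, V i) :
    SimpleGraph (Word u) :=
  SimpleGraph.fromRel fun v w => Pre G u v.1 w.1

section T1

variable {n : ℕ} {u : ∀ _ : Fin n, Fin 2}

private lemma fin2_forced : ∀ x c : Fin 2, x ≠ c → x = 1 - c := by decide

private lemma fin2_sub_ne : ∀ c : Fin 2, 1 - c ≠ c := by decide

private lemma adm_tail' {a : Letter (fun _ : Fin n => Fin 2)} {l} (h : Adm u (a :: l)) :
    Adm u l :=
  ⟨h.1.tail, fun b p hs => h.2 b p (hs.trans (List.suffix_cons a l))⟩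

private lemma head_ne' {j : Fin n} {x : Fin 2} {l} (h : Adm u (⟨j, x⟩ :: l)) :
    x ≠ upd u l j :=
  h.2 ⟨j, x⟩ l (List.suffix_refl _)

private lemma adm_cons' {l : List (Letter (fun _ : Fin n => Fin 2))} (hl : Adm u l) {j : Fin n}
    (hj : ∀ b ∈ l.head?, j ≠ Sigma.fst b) :
    Adm u (⟨j, 1 - upd u l j⟩ :: l) := by
  constructor
  · exact List.isChain_cons.2 ⟨fun b hb => hj b hb, hl.1⟩
  · intro a p hs
    rcases List.suffix_cons_iff.1 hs with h | h
    · obtain ⟨h1, h2⟩ := List.cons.injEq .. ▸ h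
      subst h2; subst h1
      exact fin2_sub_ne _
    · exact hl.2 a p h

/-- Characterization of adjacency in the free product of single edges. -/
private lemma adj_iff' (v w : Word u) :
    (freeProd (fun _ : Fin n => (⊤ : SimpleGraph (Fin 2))) u).Adj v w ↔
      (∃ a, w.1 = a :: v.1) ∨ (∃ a, v.1 = a :: w.1) := by
  constructor
  · rintro ⟨hne, hp | hp⟩
    · rcases hp with ⟨p, j, a, b, hab, hv, hw⟩ | ⟨j, a, _, hw⟩
      · exfalso
        have ha : a ≠ upd u p j := head_ne' (hv ▸ v.2)
        have hb : b ≠ upd u p j := head_ne' (hw ▸ w.2)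
        exact (SimpleGraph.top_adj ..).1 hab (fin2_forced a _ ha ▸ fin2_forced b _ hb ▸ rfl)
      · exact Or.inl ⟨⟨j, a⟩, hw⟩
    · rcases hp with ⟨p, j, a, b, hab, hv, hw⟩ | ⟨j, a, _, hw⟩
      · exfalso
        have ha : a ≠ upd u p j := head_ne' (hv ▸ w.2)
        have hb : b ≠ upd u p j := head_ne' (hw ▸ v.2)
        exact (SimpleGraph.top_adj ..).1 hab (fin2_forced a _ ha ▸ fin2_forced b _ hb ▸ rfl)
      · exact Or.inr ⟨⟨j, a⟩, hw⟩
  · intro h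
    have hne : v ≠ w := by
      rcases h with ⟨a, ha⟩ | ⟨a, ha⟩ <;> intro he <;> rw [he] at ha <;>
        exact absurd (congrArg List.length ha) (by simp)
    refine ⟨hne, ?_⟩
    rcases h with ⟨⟨j, x⟩, ha⟩ | ⟨⟨j, x⟩, ha⟩
    · exact Or.inl (Or.inr ⟨j, x, (SimpleGraph.top_adj ..).2 (Ne.symm (head_ne' (ha ▸ w.2))), ha⟩)
    · exact Or.inr (Or.inr ⟨j, x, (SimpleGraph.top_adj ..).2 (Ne.symm (head_ne' (ha ▸ v.2))), ha⟩)

private lemma adj_len' {v w : Word u}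
    (h : (freeProd (fun _ : Fin n => (⊤ : SimpleGraph (Fin 2))) u).Adj v w) :
    w.1.length = v.1.length + 1 ∨ v.1.length = w.1.length + 1 := by
  rcases (adj_iff' v w).1 h with ⟨a, ha⟩ | ⟨a, ha⟩
  · exact Or.inl (by rw [ha]; simp)
  · exact Or.inr (by rw [ha]; simp)

private lemma parent_eq' {v x y : Word u}
    (hx : (freeProd (fun _ : Fin n => (⊤ : SimpleGraph (Fin 2))) u).Adj v x)
    (hy : (freeProd (fun _ : Fin n => (⊤ : SimpleGraph (Fin 2))) u).Adj v y)
    (h1 : x.1.length < v.1.length) (h2 : y.1.length < v.1.length) : x = y := by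
  rcases (adj_iff' v x).1 hx with ⟨a, ha⟩ | ⟨a, ha⟩
  · exact absurd (congrArg List.length ha) (by simp; omega)
  rcases (adj_iff' v y).1 hy with ⟨b, hb⟩ | ⟨b, hb⟩
  · exact absurd (congrArg List.length hb) (by simp; omega)
  rw [ha] at hb
  obtain ⟨-, h⟩ := List.cons.injEq .. ▸ hb
  exact Subtype.ext h

private lemma support_getElem' {α : Type} {G' : SimpleGraph α} :
    ∀ {a b : α} (p : G'.Walk a b) (k : ℕ) (hk : k < p.support.length),
      p.support[k] = p.getVert k := by
  intro a b p
  induction p with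
  | nil =>
    intro k hk
    simp only [SimpleGraph.Walk.support_nil, List.length_cons, List.length_nil] at hk
    interval_cases k
    simp
  | cons h q ih =>
    intro k hk
    cases k with
    | zero => rfl
    | succ k =>
      simp only [SimpleGraph.Walk.support_cons, List.getElem_cons_succ,
        SimpleGraph.Walk.getVert_cons_succ]
      exact ih k (by simpa [SimpleGraph.Walk.support_cons] using hk)

end T1

section T2
variable {n : ℕ} {u : ∀ _ : Fin n, Fin 2}

open SimpleGraph

private lemma reach_aux : ∀ (l : List (Letter (fun _ : Fin n => Fin 2))) (hl : Adm u l),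
    (freeProd (fun _ : Fin n => (⊤ : SimpleGraph (Fin 2))) u).Reachable ⟨l, hl⟩ (emptyWord u) := by
  intro l
  induction l with
  | nil => exact fun hl => Reachable.refl _
  | cons a t ih =>
    intro hl
    have h1 : Adm u t := adm_tail' hl
    have hadj : (freeProd (fun _ : Fin n => (⊤ : SimpleGraph (Fin 2))) u).Adj ⟨a :: t, hl⟩ ⟨t, h1⟩ :=
      (adj_iff' _ _).2 (Or.inr ⟨a, rfl⟩)
    exact hadj.reachable.trans (ih h1)

private lemma connected' :
    (freeProd (fun _ : Fin n => (⊤ : SimpleGraph (Fin 2))) u).Connected := by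
  have hne : Nonempty (Word u) := ⟨emptyWord u⟩
  exact ⟨fun v w => (reach_aux v.1 v.2).trans (reach_aux w.1 w.2).symm⟩

private lemma acyc' :
    (freeProd (fun _ : Fin n => (⊤ : SimpleGraph (Fin 2))) u).IsAcyclic := by
  classical
  intro v c hc
  obtain ⟨m, hm, hmax⟩ := Finset.exists_max_image c.support.toFinset
    (fun w : Word u => w.1.length) ⟨v, List.mem_toFinset.2 c.start_mem_support⟩
  rw [List.mem_toFinset] at hm
  set c' := c.rotate m hm with hc'def
  have hcyc : c'.IsCycle := hc.rotate hm
  have hsub : ∀ x ∈ c'.support, x.1.length ≤ m.1.length := by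
    intro x hx
    apply hmax x
    rw [List.mem_toFinset]
    rcases List.mem_cons.1 (c'.support_eq_cons ▸ hx) with rfl | hx'
    · exact hm
    · have hperm := SimpleGraph.Walk.support_rotate c m hm
      have hxt : x ∈ c.support.tail := hperm.mem_iff.1 hx'
      exact c.support_eq_cons ▸ List.mem_cons_of_mem _ hxt
  have hL : 3 ≤ c'.length := hcyc.three_le_length
  have hadj1 : (freeProd (fun _ : Fin n => (⊤ : SimpleGraph (Fin 2))) u).Adj m (c'.getVert 1) := by
    have h := c'.adj_getVert_succ (i := 0) (by omega)
    simpa using h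
  have hadj2 : (freeProd (fun _ : Fin n => (⊤ : SimpleGraph (Fin 2))) u).Adj m
      (c'.getVert (c'.length - 1)) := by
    have h := c'.adj_getVert_succ (i := c'.length - 1) (by omega)
    rw [Nat.sub_add_cancel (by omega), SimpleGraph.Walk.getVert_length] at h
    exact h.symm
  have mem1 : c'.getVert 1 ∈ c'.support :=
    SimpleGraph.Walk.mem_support_iff_exists_getVert.2 ⟨1, rfl, by omega⟩
  have mem2 : c'.getVert (c'.length - 1) ∈ c'.support :=
    SimpleGraph.Walk.mem_support_iff_exists_getVert.2 ⟨c'.length - 1, rfl, by omega⟩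
  have l1 : (c'.getVert 1).1.length < m.1.length := by
    have hs := hsub _ mem1
    rcases adj_len' hadj1 with h | h <;> omega
  have l2 : (c'.getVert (c'.length - 1)).1.length < m.1.length := by
    have hs := hsub _ mem2
    rcases adj_len' hadj2 with h | h <;> omega
  have heq := parent_eq' hadj1 hadj2 l1 l2
  have hnd := hcyc.support_nodup
  have hlen : c'.support.tail.length = c'.length := by
    rw [List.length_tail, SimpleGraph.Walk.length_support]
    omega
  have e1 : c'.support.tail[0]'(by omega) = c'.getVert 1 := by
    rw [List.getElem_tail]
    exact support_getElem' c' 1 (by rw [SimpleGraph.Walk.length_support]; omega)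
  have e2 : c'.support.tail[c'.length - 2]'(by omega) = c'.getVert (c'.length - 1) := by
    rw [List.getElem_tail]
    rw [support_getElem' c' (c'.length - 2 + 1) (by rw [SimpleGraph.Walk.length_support]; omega)]
    congr 1
    omega
  have : (0 : ℕ) = c'.length - 2 := by
    have := hnd.getElem_inj_iff (i := 0) (hi := by omega) (j := c'.length - 2) (hj := by omega)
    exact this.1 (by rw [e1, e2, heq])
  omega

end T2

section T3
variable {n : ℕ} {u : ∀ _ : Fin n, Fin 2}

private def gnb0 (hl : Adm u ([] : List (Letter (fun _ : Fin n => Fin 2)))) (j : Fin n) :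
    Word u :=
  ⟨[⟨j, 1 - upd u [] j⟩], adm_cons' hl (by simp)⟩

private def gnbr (i : Fin n) (x : Fin 2) (p : List (Letter (fun _ : Fin n => Fin 2)))
    (hl : Adm u (⟨i, x⟩ :: p)) (j : Fin n) : Word u :=
  if h : j = i then ⟨p, adm_tail' hl⟩
  else ⟨⟨j, 1 - upd u (⟨i, x⟩ :: p) j⟩ :: ⟨i, x⟩ :: p,
        adm_cons' hl (fun b hb => by simp at hb; subst hb; exact h)⟩

private lemma gnbr_pos (i : Fin n) (x : Fin 2) (p) (hl : Adm u (⟨i, x⟩ :: p)) :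
    (gnbr i x p hl i).1 = p := by
  simp [gnbr]

private lemma gnbr_neg (i : Fin n) (x : Fin 2) (p) (hl : Adm u (⟨i, x⟩ :: p)) {j : Fin n}
    (h : j ≠ i) :
    (gnbr i x p hl j).1 = ⟨j, 1 - upd u (⟨i, x⟩ :: p) j⟩ :: ⟨i, x⟩ :: p := by
  simp [gnbr, h]

private lemma deg' (v : Word u) :
    ((freeProd (fun _ : Fin n => (⊤ : SimpleGraph (Fin 2))) u).neighborSet v).ncard = n := by
  obtain ⟨l, hl⟩ := v
  cases l with
  | nil =>
    have hrange : (freeProd (fun _ : Fin n => (⊤ : SimpleGraph (Fin 2))) u).neighborSet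
        ⟨[], hl⟩ = Set.range (gnb0 hl) := by
      ext w
      refine (SimpleGraph.mem_neighborSet ..).trans ((adj_iff' _ _).trans ?_)
      simp only [Set.mem_range]
      constructor
      · rintro (⟨⟨j, x⟩, ha⟩ | ⟨a, ha⟩)
        · refine ⟨j, Subtype.ext ?_⟩
          have hx : x ≠ upd u [] j := head_ne' (ha ▸ w.2)
          rw [ha, fin2_forced x _ hx]
          rfl
        · exact absurd ha (by simp)
      · rintro ⟨j, rfl⟩
        exact Or.inl ⟨⟨j, 1 - upd u [] j⟩, rfl⟩
    have hinj : Function.Injective (gnb0 (u := u) hl) := by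
      intro j j' h
      have := congrArg (fun w : Word u => w.1) h
      simp only [gnb0, List.cons.injEq] at this
      exact congrArg Sigma.fst this.1
    rw [hrange, ← Set.image_univ, Set.ncard_image_of_injective _ hinj, Set.ncard_univ,
      Nat.card_eq_fintype_card, Fintype.card_fin]
  | cons a p =>
    obtain ⟨i, x⟩ := a
    have hrange : (freeProd (fun _ : Fin n => (⊤ : SimpleGraph (Fin 2))) u).neighborSet
        ⟨⟨i, x⟩ :: p, hl⟩ = Set.range (gnbr i x p hl) := by
      ext w
      refine (SimpleGraph.mem_neighborSet ..).trans ((adj_iff' _ _).trans ?_)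
      simp only [Set.mem_range]
      constructor
      · rintro (⟨⟨j, y⟩, ha⟩ | ⟨a, ha⟩)
        · have hch : List.Chain' (fun a b : Letter (fun _ : Fin n => Fin 2) => a.1 ≠ b.1)
              (⟨j, y⟩ :: ⟨i, x⟩ :: p) := (ha ▸ w.2).1
          have hji : j ≠ i := (List.isChain_cons_cons.1 hch).1
          refine ⟨j, Subtype.ext ?_⟩
          rw [gnbr_neg i x p hl hji, ha]
          have hy : y ≠ upd u (⟨i, x⟩ :: p) j := head_ne' (ha ▸ w.2)
          rw [fin2_forced y _ hy]
        · obtain ⟨h1, h2⟩ := List.cons.injEq .. ▸ ha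
          refine ⟨i, Subtype.ext ?_⟩
          rw [gnbr_pos, h2]
      · rintro ⟨j, rfl⟩
        by_cases h : j = i
        · subst h
          exact Or.inr ⟨⟨j, x⟩, by rw [gnbr_pos]⟩
        · exact Or.inl ⟨⟨j, 1 - upd u (⟨i, x⟩ :: p) j⟩, by rw [gnbr_neg i x p hl h]⟩
    have hinj : Function.Injective (gnbr i x p hl) := by
      intro j j' h
      by_cases hj : j = i <;> by_cases hj' : j' = i
      · rw [hj, hj']
      · exfalso
        have := congrArg (fun w : Word u => w.1.length) h
        rw [hj] at this
        simp only [gnbr_pos, gnbr_neg i x p hl hj', List.length_cons] at this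
        omega
      · exfalso
        have := congrArg (fun w : Word u => w.1.length) h
        rw [hj'] at this
        simp only [gnbr_pos, gnbr_neg i x p hl hj, List.length_cons] at this
        omega
      · have := congrArg (fun w : Word u => w.1) h
        simp only [gnbr_neg i x p hl hj, gnbr_neg i x p hl hj', List.cons.injEq] at this
        exact congrArg Sigma.fst this.1
    rw [hrange, ← Set.image_univ, Set.ncard_image_of_injective _ hinj, Set.ncard_univ,
      Nat.card_eq_fintype_card, Fintype.card_fin]

end T3

/-- The free product of `n` copies of the single-edge graph `T₁`
is a tree which is regular of degree `n`. -/
theorem stmt7 (n : ℕ) (u : ∀ _ : Fin n, Fin 2) :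
    (freeProd (fun _ : Fin n => (⊤ : SimpleGraph (Fin 2))) u).IsTree ∧
    ∀ v : Word u,
      ((freeProd (fun _ : Fin n => (⊤ : SimpleGraph (Fin 2))) u).neighborSet v).ncard = n :=
  ⟨⟨connected', acyc'⟩, deg'⟩
end

section
/- Two free products of the same connected simple graphs Γ₁, …, Γₙ constructed with respect to different initial base tuples (u₁,…,uₙ) and (u₁',…,uₙ') in V₁ × ⋯ × Vₙ are isomorphic as graphs. -/
variable {ι : Type} [DecidableEq ι]

section Aux
variable {V : ι → Type}

lemma upd_append (u : ∀ i, V i) (w t : List (Letter V)) :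
    upd u (w ++ t) = upd (upd u t) w := by
  induction w with
  | nil => rfl
  | cons a w ih => obtain ⟨i, x⟩ := a; simp [upd, ih]

lemma upd_singleton (u : ∀ i, V i) (b : Letter V) :
    upd u [b] = Function.update u b.1 b.2 := by
  obtain ⟨i, x⟩ := b; rfl

lemma upd_concat (u : ∀ i, V i) (w : List (Letter V)) (b : Letter V) :
    upd u (w ++ [b]) = upd (Function.update u b.1 b.2) w := by
  rw [upd_append, upd_singleton]

lemma adm_nil (u : ∀ i, V i) : Adm u [] :=
  ⟨List.isChain_nil, by intro a p h; simp at h⟩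

lemma suffix_concat_iff {α : Type*} {l t : List α} {b : α} :
    t <:+ l ++ [b] ↔ t = [] ∨ ∃ s, s <:+ l ∧ t = s ++ [b] := by
  constructor
  · rintro ⟨r, hr⟩
    rcases List.eq_nil_or_concat t with rfl | ⟨t', x, rfl⟩
    · exact Or.inl rfl
    · right
      rw [List.concat_eq_append] at hr ⊢
      have h2 : (r ++ t') ++ [x] = l ++ [b] := by simpa using hr
      obtain ⟨h3, h4⟩ := List.append_inj' h2 rfl
      refine ⟨t', ⟨r, h3⟩, ?_⟩
      simpa using h4
  · rintro (rfl | ⟨s, ⟨r, rfl⟩, rfl⟩)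
    · exact List.nil_suffix
    · exact ⟨r, by simp⟩

lemma adm_concat (u : ∀ i, V i) (w : List (Letter V)) (b : Letter V) :
    Adm u (w ++ [b]) ↔ Adm (Function.update u b.1 b.2) w ∧ b.2 ≠ u b.1 ∧
      ∀ a ∈ w.getLast?, a.1 ≠ b.1 := by
  constructor
  · rintro ⟨hc, hs⟩
    rw [List.Chain', List.isChain_append] at hc
    refine ⟨⟨hc.1, ?_⟩, ?_, ?_⟩
    · intro a p hp
      obtain ⟨s, rfl⟩ := hp
      have := hs a (p ++ [b]) ⟨s, by simp⟩
      rwa [upd_concat] at this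
    · have := hs b [] ⟨w, rfl⟩
      simpa [upd] using this
    · intro a ha
      exact hc.2.2 a ha b (by simp)
  · rintro ⟨⟨hc, hs⟩, hb, hlast⟩
    refine ⟨?_, ?_⟩
    · rw [List.Chain', List.isChain_append]
      refine ⟨hc, List.isChain_singleton _, ?_⟩
      intro x hx y hy
      simp only [List.head?_cons, Option.mem_def, Option.some.injEq] at hy
      subst hy
      exact hlast x hx
    · intro a p hp
      rcases suffix_concat_iff.mp hp with h0 | ⟨s, hsw, hsp⟩
      · simp at h0
      · cases s with
        | nil =>
          simp only [List.nil_append, List.cons.injEq] at hsp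
          obtain ⟨rfl, rfl⟩ := hsp
          simpa [upd] using hb
        | cons a' p' =>
          simp only [List.cons_append, List.cons.injEq] at hsp
          obtain ⟨rfl, rfl⟩ := hsp
          rw [upd_concat]
          exact hs a p' hsw

end Aux

section CoreF
variable {V : ι → Type}

open Classical in
noncomputable def core (j : ι) (c c' : V j) : List (Letter V) → List (Letter V)
  | [] => [⟨j, c⟩]
  | a :: r =>
    if a = (⟨j, c'⟩ : Letter V) then r
    else if a.1 = j then a :: r else ⟨j, c⟩ :: a :: r

noncomputable def F (j : ι) (c c' : V j) (w : List (Letter V)) : List (Letter V) :=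
  (core j c c' w.reverse).reverse

lemma F_nil (j : ι) (c c' : V j) : F j c c' [] = [⟨j, c⟩] := by
  simp [F, core]

lemma F_concat_drop (j : ι) (c c' : V j) (w : List (Letter V)) :
    F j c c' (w ++ [⟨j, c'⟩]) = w := by
  simp [F, core]

lemma F_concat_same (j : ι) (c c' : V j) (w : List (Letter V)) (x : V j) (hx : x ≠ c') :
    F j c c' (w ++ [⟨j, x⟩]) = w ++ [⟨j, x⟩] := by
  simp [F, core, hx]

lemma F_concat_other (j : ι) (c c' : V j) (w : List (Letter V)) (b : Letter V)
    (hb : b.1 ≠ j) : F j c c' (w ++ [b]) = w ++ [b, ⟨j, c⟩] := by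
  obtain ⟨i, x⟩ := b
  simp only at hb
  simp [F, core, hb]

lemma F_cons (j : ι) (c c' : V j) (a : Letter V) (w : List (Letter V)) (hw : w ≠ []) :
    F j c c' (a :: w) = a :: F j c c' w := by
  rcases List.eq_nil_or_concat w with rfl | ⟨w₀, b, rfl⟩
  · exact absurd rfl hw
  rw [List.concat_eq_append]
  by_cases hb1 : b.1 = j
  · obtain ⟨i, x⟩ := b
    simp only at hb1
    subst hb1
    by_cases hx : x = c'
    · rw [hx, show a :: (w₀ ++ [(⟨i, c'⟩ : Letter V)]) = (a :: w₀) ++ [⟨i, c'⟩] from rfl,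
        F_concat_drop, F_concat_drop]
    · rw [F_concat_same _ _ _ _ _ hx, show a :: (w₀ ++ [(⟨i, x⟩ : Letter V)]) = (a :: w₀) ++ [⟨i, x⟩] from rfl,
        F_concat_same _ _ _ _ _ hx]
  · rw [F_concat_other _ _ _ _ _ hb1, show a :: (w₀ ++ [b]) = (a :: w₀) ++ [b] from rfl,
      F_concat_other _ _ _ _ _ hb1]
    rfl

end CoreF

section Params
variable {V : ι → Type} (u u' : ∀ i, V i) (j : ι)

lemma update_eq₁ (h : ∀ i, i ≠ j → u i = u' i) :
    Function.update u j (u' j) = u' := by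
  funext i
  rcases eq_or_ne i j with rfl | hi
  · simp
  · rw [Function.update_of_ne hi]
    exact h i hi

lemma update_mid (h : ∀ i, i ≠ j → u i = u' i) (x : V j) :
    Function.update u j x = Function.update u' j x := by
  funext i
  rcases eq_or_ne i j with rfl | hi
  · simp
  · rw [Function.update_of_ne hi, Function.update_of_ne hi]
    exact h i hi

lemma update_eq₂ (h : ∀ i, i ≠ j → u i = u' i) :
    Function.update u' j (u j) = u :=
  update_eq₁ u' u j fun i hi => (h i hi).symm

lemma F_upd (h : ∀ i, i ≠ j → u i = u' i) (w : List (Letter V)) :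
    upd u' (F j (u j) (u' j) w) = upd u w := by
  rcases List.eq_nil_or_concat w with rfl | ⟨w₀, b, rfl⟩
  · rw [F_nil, upd_singleton]
    exact update_eq₂ u u' j h
  rw [List.concat_eq_append]
  by_cases hb1 : b.1 = j
  · obtain ⟨i, x⟩ := b
    simp only at hb1
    subst hb1
    by_cases hx : x = u' i
    · rw [hx, F_concat_drop, upd_concat]
      show upd u' w₀ = upd (Function.update u i (u' i)) w₀
      rw [update_eq₁ u u' i h]
    · rw [F_concat_same _ _ _ _ _ hx, upd_concat, upd_concat]
      show upd (Function.update u' i x) w₀ = upd (Function.update u i x) w₀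
      rw [update_mid u u' i h x]
  · rw [F_concat_other _ _ _ _ _ hb1,
      show w₀ ++ [b, ⟨j, u j⟩] = (w₀ ++ [b]) ++ [⟨j, u j⟩] by simp, upd_concat]
    show upd (Function.update u' j (u j)) (w₀ ++ [b]) = upd u (w₀ ++ [b])
    rw [update_eq₂ u u' j h]

lemma F_adm (h : ∀ i, i ≠ j → u i = u' i) (hne : u j ≠ u' j)
    {w : List (Letter V)} (hw : Adm u w) : Adm u' (F j (u j) (u' j) w) := by
  rcases List.eq_nil_or_concat w with rfl | ⟨w₀, b, rfl⟩
  · rw [F_nil]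
    rw [show ([⟨j, u j⟩] : List (Letter V)) = [] ++ [⟨j, u j⟩] from rfl, adm_concat]
    exact ⟨adm_nil _, hne, by simp⟩
  rw [List.concat_eq_append] at hw ⊢
  by_cases hb1 : b.1 = j
  · obtain ⟨i, x⟩ := b
    simp only at hb1
    subst hb1
    rw [adm_concat] at hw
    obtain ⟨hw1, hw2, hw3⟩ := hw
    by_cases hx : x = u' i
    · rw [hx, F_concat_drop]
      rw [hx, show Function.update u (⟨i, u' i⟩ : Letter V).1 (⟨i, u' i⟩ : Letter V).2
        = Function.update u i (u' i) from rfl, update_eq₁ u u' i h] at hw1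
      exact hw1
    · rw [F_concat_same _ _ _ _ _ hx, adm_concat]
      refine ⟨?_, hx, hw3⟩
      rw [show Function.update u' (⟨i, x⟩ : Letter V).1 (⟨i, x⟩ : Letter V).2
        = Function.update u' i x from rfl, ← update_mid u u' i h x]
      exact hw1
  · rw [F_concat_other _ _ _ _ _ hb1,
      show w₀ ++ [b, ⟨j, u j⟩] = (w₀ ++ [b]) ++ [⟨j, u j⟩] by simp, adm_concat]
    refine ⟨?_, hne, ?_⟩
    · rw [show Function.update u' (⟨j, u j⟩ : Letter V).1 (⟨j, u j⟩ : Letter V).2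
        = Function.update u' j (u j) from rfl, update_eq₂ u u' j h]
      exact hw
    · intro a ha
      rw [List.getLast?_concat] at ha
      simp only [Option.mem_def, Option.some.injEq] at ha
      subst ha
      exact hb1

end Params

section Invol
variable {V : ι → Type} (u u' : ∀ i, V i) (j : ι)

lemma F_F {w : List (Letter V)} (hw : Adm u w) :
    F j (u' j) (u j) (F j (u j) (u' j) w) = w := by
  rcases List.eq_nil_or_concat w with rfl | ⟨w₀, b, rfl⟩
  · rw [F_nil, show ([⟨j, u j⟩] : List (Letter V)) = [] ++ [⟨j, u j⟩] from rfl, F_concat_drop]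
  rw [List.concat_eq_append] at hw ⊢
  rw [adm_concat] at hw
  obtain ⟨hw1, hw2, hw3⟩ := hw
  by_cases hb1 : b.1 = j
  · obtain ⟨i, x⟩ := b
    simp only at hb1
    subst hb1
    by_cases hx : x = u' i
    · rw [hx, F_concat_drop]
      rcases List.eq_nil_or_concat w₀ with rfl | ⟨w₁, b', rfl⟩
      · rw [F_nil]; rfl
      · rw [List.concat_eq_append] at hw3 ⊢
        have hb' : b'.1 ≠ i := hw3 b' (by rw [List.getLast?_concat]; rfl)
        rw [F_concat_other _ _ _ _ _ hb']
        simp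
    · have hxu : x ≠ u i := by simpa [upd] using hw2
      rw [F_concat_same _ _ _ _ _ hx, F_concat_same _ _ _ _ _ hxu]
  · rw [F_concat_other _ _ _ _ _ hb1,
      show w₀ ++ [b, ⟨j, u j⟩] = (w₀ ++ [b]) ++ [⟨j, u j⟩] by simp, F_concat_drop]

end Invol

section PreMap
variable {V : ι → Type} (G : ∀ i, SimpleGraph (V i)) (u u' : ∀ i, V i) (j : ι)

lemma F_pre (h : ∀ i, i ≠ j → u i = u' i) (hne : u j ≠ u' j)
    {v w : List (Letter V)} (hP : Pre G u v w) :
    Pre G u' (F j (u j) (u' j) v) (F j (u j) (u' j) w) ∨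
      Pre G u' (F j (u j) (u' j) w) (F j (u j) (u' j) v) := by
  rcases hP with ⟨p, j₀, a, b, hab, rfl, rfl⟩ | ⟨j₀, a, hadj, rfl⟩
  · -- head replacement
    rcases List.eq_nil_or_concat p with rfl | ⟨p₀, b₀, rfl⟩
    · -- p = []
      by_cases hj : j₀ = j
      · subst hj
        by_cases ha : a = u' j₀
        · -- F drops v to []
          rw [show ([⟨j₀, a⟩] : List (Letter V)) = [] ++ [⟨j₀, a⟩] from rfl, ha, F_concat_drop]
          have hb : b ≠ u' j₀ := fun hb => hab.ne (ha.trans hb.symm)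
          rw [show ([⟨j₀, b⟩] : List (Letter V)) = [] ++ [⟨j₀, b⟩] from rfl,
            F_concat_same _ _ _ _ _ hb]
          left; right
          exact ⟨j₀, b, by simpa [upd, ← ha] using hab, by simp⟩
        · by_cases hb : b = u' j₀
          · rw [show ([⟨j₀, b⟩] : List (Letter V)) = [] ++ [⟨j₀, b⟩] from rfl, hb, F_concat_drop]
            rw [show ([⟨j₀, a⟩] : List (Letter V)) = [] ++ [⟨j₀, a⟩] from rfl,
              F_concat_same _ _ _ _ _ ha]
            right; right
            exact ⟨j₀, a, by simpa [upd, ← hb] using hab.symm, by simp⟩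
          · rw [show ([⟨j₀, a⟩] : List (Letter V)) = [] ++ [⟨j₀, a⟩] from rfl,
              F_concat_same _ _ _ _ _ ha,
              show ([⟨j₀, b⟩] : List (Letter V)) = [] ++ [⟨j₀, b⟩] from rfl,
              F_concat_same _ _ _ _ _ hb]
            left; left
            exact ⟨[], j₀, a, b, hab, rfl, rfl⟩
      · have hj' : (⟨j₀, a⟩ : Letter V).1 ≠ j := hj
        have hj'' : (⟨j₀, b⟩ : Letter V).1 ≠ j := hj
        rw [show ([⟨j₀, a⟩] : List (Letter V)) = [] ++ [⟨j₀, a⟩] from rfl,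
          F_concat_other _ _ _ _ _ hj',
          show ([⟨j₀, b⟩] : List (Letter V)) = [] ++ [⟨j₀, b⟩] from rfl,
          F_concat_other _ _ _ _ _ hj'']
        left; left
        exact ⟨[⟨j, u j⟩], j₀, a, b, hab, rfl, rfl⟩
    · -- p nonempty
      rw [List.concat_eq_append]
      have hp : p₀ ++ [b₀] ≠ [] := by simp
      rw [F_cons _ _ _ _ _ hp, F_cons _ _ _ _ _ hp]
      left; left
      exact ⟨F j (u j) (u' j) (p₀ ++ [b₀]), j₀, a, b, hab, rfl, rfl⟩
  · -- head extension
    rcases List.eq_nil_or_concat v with rfl | ⟨v₀, b₀, rfl⟩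
    · -- v = []
      rw [F_nil]
      simp only [upd] at hadj
      by_cases hj : j₀ = j
      · subst hj
        by_cases ha : a = u' j₀
        · rw [show ([⟨j₀, a⟩] : List (Letter V)) = [] ++ [⟨j₀, a⟩] from rfl, ha, F_concat_drop]
          right; right
          exact ⟨j₀, u j₀, by simpa [upd, ← ha] using hadj.symm, rfl⟩
        · rw [show ([⟨j₀, a⟩] : List (Letter V)) = [] ++ [⟨j₀, a⟩] from rfl,
            F_concat_same _ _ _ _ _ ha]
          left; left
          exact ⟨[], j₀, u j₀, a, hadj, rfl, rfl⟩
      · have hj' : (⟨j₀, a⟩ : Letter V).1 ≠ j := hj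
        rw [show ([⟨j₀, a⟩] : List (Letter V)) = [] ++ [⟨j₀, a⟩] from rfl,
          F_concat_other _ _ _ _ _ hj']
        left; right
        refine ⟨j₀, a, ?_, rfl⟩
        rw [upd_singleton]
        show (G j₀).Adj (Function.update u' j (u j) j₀) a
        rw [update_eq₂ u u' j h]
        exact hadj
    · rw [List.concat_eq_append] at hadj ⊢
      have hv : v₀ ++ [b₀] ≠ [] := by simp
      rw [F_cons _ _ _ _ _ hv]
      left; right
      refine ⟨j₀, a, ?_, rfl⟩
      rw [F_upd u u' j h]
      exact hadj

end PreMap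

section Iso
variable {V : ι → Type} (G : ∀ i, SimpleGraph (V i)) (u u' : ∀ i, V i) (j : ι)

noncomputable def stepEquiv (h : ∀ i, i ≠ j → u i = u' i) (hne : u j ≠ u' j) :
    Word u ≃ Word u' where
  toFun x := ⟨F j (u j) (u' j) x.1, F_adm u u' j h hne x.2⟩
  invFun y := ⟨F j (u' j) (u j) y.1,
    F_adm u' u j (fun i hi => (h i hi).symm) (Ne.symm hne) y.2⟩
  left_inv x := Subtype.ext (F_F u u' j x.2)
  right_inv y := Subtype.ext (F_F u' u j y.2)

lemma stepEquiv_adj (h : ∀ i, i ≠ j → u i = u' i) (hne : u j ≠ u' j)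
    {x y : Word u} (hxy : (freeProd G u).Adj x y) :
    (freeProd G u').Adj (stepEquiv u u' j h hne x) (stepEquiv u u' j h hne y) := by
  rw [freeProd, SimpleGraph.fromRel_adj] at hxy ⊢
  obtain ⟨hne', hpre⟩ := hxy
  refine ⟨fun he => hne' ((stepEquiv u u' j h hne).injective he), ?_⟩
  rcases hpre with hp | hp
  · exact F_pre G u u' j h hne hp
  · rcases F_pre G u u' j h hne hp with h1 | h1
    · exact Or.inr h1
    · exact Or.inl h1

noncomputable def stepIso (h : ∀ i, i ≠ j → u i = u' i) (hne : u j ≠ u' j) :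
    freeProd G u ≃g freeProd G u' where
  toEquiv := stepEquiv u u' j h hne
  map_rel_iff' := by
    intro x y
    constructor
    · intro hxy
      have h' : ∀ i, i ≠ j → u' i = u i := fun i hi => (h i hi).symm
      have := stepEquiv_adj G u' u j h' (Ne.symm hne) hxy
      rwa [show (stepEquiv u' u j h' (Ne.symm hne)) ((stepEquiv u u' j h hne) x) = x from
          Subtype.ext (F_F u u' j x.2),
        show (stepEquiv u' u j h' (Ne.symm hne)) ((stepEquiv u u' j h hne) y) = y from
          Subtype.ext (F_F u u' j y.2)] at this
    · exact stepEquiv_adj G u u' j h hne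

lemma step (h : ∀ i, i ≠ j → u i = u' i) :
    Nonempty (freeProd G u ≃g freeProd G u') := by
  by_cases hj : u j = u' j
  · have huu : u = u' := by
      funext i
      by_cases hi : i = j
      · subst hi; exact hj
      · exact h i hi
    subst huu
    exact ⟨RelIso.refl _⟩
  · exact ⟨stepIso G u u' j h hj⟩

end Iso


/-- Free products of the same connected graphs with respect to different
initial base tuples are isomorphic. -/
theorem stmt9 {n : ℕ} {V : Fin n → Type} (G : ∀ i, SimpleGraph (V i))
    (u u' : ∀ i, V i) (hconn : ∀ i, (G i).Connected) :
    Nonempty (freeProd G u ≃g freeProd G u') := by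
  let uk : ℕ → ∀ i, V i := fun k i => if (i : ℕ) < k then u' i else u i
  have key : ∀ k : ℕ, k ≤ n → Nonempty (freeProd G u ≃g freeProd G (uk k)) := by
    intro k
    induction k with
    | zero =>
      intro _
      have : uk 0 = u := by funext i; simp [uk]
      rw [this]
      exact ⟨RelIso.refl _⟩
    | succ k ih =>
      intro hk
      obtain ⟨e₁⟩ := ih (Nat.le_of_succ_le hk)
      have hkn : k < n := hk
      obtain ⟨e₂⟩ := step G (uk k) (uk (k + 1)) ⟨k, hkn⟩ (by
        intro i hi
        have hik : (i : ℕ) ≠ k := fun hik => hi (Fin.ext hik)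
        simp only [uk]
        split_ifs with h1 h2 <;> first | rfl | omega)
      exact ⟨e₁.trans e₂⟩
  have hn : uk n = u' := by
    funext i
    simp [uk, i.isLt]
  obtain ⟨e⟩ := key n le_rfl
  rw [hn] at e
  exact ⟨e⟩
end

section
/- In the free product Γ = ⋆ᵢ₌₁ⁿ Γᵢ of connected simple graphs, any two paths of minimal length between two fixed vertices ṽ and w̃ have the same set of transition points. -/
variable {ι : Type} [DecidableEq ι]

/-- The edge `{v, w}` of the free product lies in a sheet of the factor `j`. -/
def HasColor {ι : Type} [DecidableEq ι] {V : ι → Type} (G : ∀ i, SimpleGraph (V i))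
    (u : ∀ i, V i) (j : ι) (v w : List (Letter V)) : Prop :=
  (∃ (p : List (Letter V)) (a b : V j),
      (G j).Adj a b ∧ v = ⟨j, a⟩ :: p ∧ w = ⟨j, b⟩ :: p) ∨
  (∃ a : V j, (G j).Adj (upd u v j) a ∧ w = ⟨j, a⟩ :: v) ∨
  (∃ a : V j, (G j).Adj (upd u w j) a ∧ v = ⟨j, a⟩ :: w)

/-- `x` is a transition point of the walk `p`: two consecutive edges of `p`
meeting at `x` lie in sheets of distinct factors. -/
def IsTransitionPt {ι : Type} [DecidableEq ι] {V : ι → Type} {G : ∀ i, SimpleGraph (V i)}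
    {u : ∀ i, V i} {s t : Word u} (p : (freeProd G u).Walk s t) (x : Word u) : Prop :=
  ∃ (m : ℕ) (h : m + 1 < p.darts.length) (j j' : ι), j ≠ j' ∧
    (p.darts[m]'(by omega)).snd = x ∧
    HasColor G u j (p.darts[m]'(by omega)).fst.1 (p.darts[m]'(by omega)).snd.1 ∧
    HasColor G u j' (p.darts[m+1]'h).fst.1 (p.darts[m+1]'h).snd.1

section Aux

namespace SimpleGraph.Walk
variable {X : Type*} {G : SimpleGraph X} {a b : X}

theorem darts_getElem_fst' (p : G.Walk a b) (i : ℕ) (h : i < p.darts.length) :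
    (p.darts[i]'h).fst = p.getVert i := by
  induction p generalizing i with
  | nil => simp at h
  | cons hadj q ih =>
    cases i with
    | zero => rfl
    | succ n => exact ih n (by simpa [darts] using h)

theorem darts_getElem_snd' (p : G.Walk a b) (i : ℕ) (h : i < p.darts.length) :
    (p.darts[i]'h).snd = p.getVert (i+1) := by
  induction p generalizing i with
  | nil => simp at h
  | cons hadj q ih =>
    cases i with
    | zero => cases q <;> rfl
    | succ n => exact ih n (by simpa [darts] using h)

theorem support_getElem_eq_getVert' (p : G.Walk a b) (i : ℕ) (h : i < p.support.length) :
    p.support[i]'h = p.getVert i := by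
  induction p generalizing i with
  | nil =>
    simp only [SimpleGraph.Walk.support_nil, List.length_singleton] at h
    interval_cases i
    simp [SimpleGraph.Walk.getVert]
  | cons hadj q ih =>
    cases i with
    | zero => rfl
    | succ n => simpa [support, getVert] using ih n (by simpa [support] using h)

theorem IsPath.getVert_inj' {p : G.Walk a b} (hp : p.IsPath) {i k : ℕ}
    (hi : i ≤ p.length) (hk : k ≤ p.length) (h : p.getVert i = p.getVert k) : i = k := by
  have hnd := hp.support_nodup
  have hi' : i < p.support.length := by rw [length_support]; omega
  have hk' : k < p.support.length := by rw [length_support]; omega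
  have h2 : p.support[i]'hi' = p.support[k]'hk' := by
    rw [support_getElem_eq_getVert', support_getElem_eq_getVert']; exact h
  have := List.nodup_iff_injective_getElem.mp hnd
    (a₁ := ⟨i, hi'⟩) (a₂ := ⟨k, hk'⟩) h2
  simpa using this

end SimpleGraph.Walk

variable {V : ι → Type}

-- the letter of `y` sitting directly above the suffix `t` (if `t <:+ y`, `y ≠ t`).
open Classical in
noncomputable def lab (t : List (Letter V)) : List (Letter V) → Option (Letter V)
  | [] => none
  | a :: y => if y = t then some a else lab t y

theorem lab_cons_eq {t y : List (Letter V)} (a : Letter V) (h : y = t) :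
    lab t (a :: y) = some a := by
  simp only [lab]; rw [if_pos h]

theorem lab_cons_ne {t y : List (Letter V)} (a : Letter V) (h : y ≠ t) :
    lab t (a :: y) = lab t y := by
  simp only [lab]; rw [if_neg h]

theorem lab_eq_none_of_le {t : List (Letter V)} :
    ∀ {y : List (Letter V)}, y.length ≤ t.length → lab t y = none
  | [], _ => rfl
  | a :: y, h => by
    have hne : y ≠ t := by
      intro he; subst he; simp only [List.length_cons] at h; omega
    rw [lab_cons_ne a hne]
    exact lab_eq_none_of_le (by simp only [List.length_cons] at h; omega)

-- the factor of the letter of `y` directly above `t`.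
noncomputable def fval (t y : List (Letter V)) : Option ι := (lab t y).map Sigma.fst

theorem exists_color {G : ∀ i, SimpleGraph (V i)} {u : ∀ i, V i} {y z : Word u}
    (h : (freeProd G u).Adj y z) : ∃ j, HasColor G u j y.1 z.1 := by
  rw [freeProd, SimpleGraph.fromRel_adj] at h
  unfold Pre at h
  unfold HasColor
  rcases h with ⟨-, h | h⟩
  · rcases h with ⟨p, j, a, b, hab, h1, h2⟩ | ⟨j, a, hadj, h2⟩
    · exact ⟨j, Or.inl ⟨p, a, b, hab, h1, h2⟩⟩
    · exact ⟨j, Or.inr (Or.inl ⟨a, hadj, h2⟩)⟩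
  · rcases h with ⟨p, j, a, b, hab, h1, h2⟩ | ⟨j, a, hadj, h2⟩
    · exact ⟨j, Or.inl ⟨p, b, a, hab.symm, h2, h1⟩⟩
    · exact ⟨j, Or.inr (Or.inr ⟨a, hadj, h2⟩)⟩

theorem hasColor_symm {G : ∀ i, SimpleGraph (V i)} {u : ∀ i, V i} {j : ι}
    {y z : List (Letter V)} (h : HasColor G u j y z) : HasColor G u j z y := by
  unfold HasColor at h ⊢
  rcases h with ⟨p, a, b, hab, h1, h2⟩ | ⟨a, hadj, h2⟩ | ⟨a, hadj, h2⟩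
  · exact Or.inl ⟨p, b, a, hab.symm, h2, h1⟩
  · exact Or.inr (Or.inr ⟨a, hadj, h2⟩)
  · exact Or.inr (Or.inl ⟨a, hadj, h2⟩)

/-- `fval t` is constant along edges avoiding `t`. -/
theorem fval_eq_of_color {G : ∀ i, SimpleGraph (V i)} {u : ∀ i, V i} {j : ι}
    {t y z : List (Letter V)} (hc : HasColor G u j y z)
    (hy : y ≠ t) (hz : z ≠ t) : fval t y = fval t z := by
  unfold HasColor at hc
  rcases hc with ⟨p, a, b, hab, h1, h2⟩ | ⟨a, hadj, h2⟩ | ⟨a, hadj, h2⟩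
  · subst h1; subst h2
    unfold fval
    by_cases hp : p = t
    · rw [lab_cons_eq _ hp, lab_cons_eq _ hp]; rfl
    · rw [lab_cons_ne _ hp, lab_cons_ne _ hp]
  · subst h2; unfold fval; rw [lab_cons_ne _ hy]
  · subst h2; unfold fval; rw [lab_cons_ne _ hz]

/-- the color of an edge incident to `t` is determined by `fval t` of the other endpoint. -/
theorem color_det {G : ∀ i, SimpleGraph (V i)} {u : ∀ i, V i} {j : ι}
    {t y : List (Letter V)} (hc : HasColor G u j y t) :
    fval t y = some j ∨
      (fval t y = none ∧ ∃ (b : V j) (p : List (Letter V)), t = ⟨j, b⟩ :: p) := by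
  unfold HasColor at hc
  rcases hc with ⟨p, a, b, hab, h1, h2⟩ | ⟨a, hadj, h2⟩ | ⟨a, hadj, h2⟩
  · refine Or.inr ⟨?_, b, p, h2⟩
    subst h1
    have hp : p ≠ t := by intro he; rw [← he] at h2; exact List.cons_ne_self _ _ h2.symm
    unfold fval
    rw [lab_cons_ne _ hp, lab_eq_none_of_le (by rw [h2]; simp)]
    rfl
  · refine Or.inr ⟨?_, a, y, h2⟩
    unfold fval
    rw [lab_eq_none_of_le (by rw [h2]; simp)]
    rfl
  · subst h2
    exact Or.inl (by unfold fval; rw [lab_cons_eq _ rfl]; rfl)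

theorem color_det_inj {t : List (Letter V)} {j j' : ι} {o : Option ι}
    (h1 : o = some j ∨ (o = none ∧ ∃ (b : V j) (p : List (Letter V)), t = ⟨j, b⟩ :: p))
    (h2 : o = some j' ∨ (o = none ∧ ∃ (b : V j') (p : List (Letter V)), t = ⟨j', b⟩ :: p)) :
    j = j' := by
  rcases h1 with h1 | ⟨h1, b, p, hbp⟩ <;> rcases h2 with h2 | ⟨h2, b', p', hbp'⟩
  · rw [h1] at h2; exact Option.some_inj.mp h2
  · rw [h1] at h2; simp at h2
  · rw [h2] at h1; simp at h1
  · rw [hbp] at hbp'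
    exact congrArg Sigma.fst (List.cons_eq_cons.mp hbp').1

end Aux

section Main
variable {V : ι → Type} {G : ∀ i, SimpleGraph (V i)} {u : ∀ i, V i}

theorem word_ext {y z : Word u (V := V)} (h : y.1 = z.1) : y = z := Subtype.ext h

theorem fval_const {x v' w' : Word u (V := V)} (r : (freeProd G u).Walk v' w')
    {i : ℕ} : ∀ k, i ≤ k → k ≤ r.length → (∀ l, i ≤ l → l ≤ k → r.getVert l ≠ x) →
    fval x.1 (r.getVert i).1 = fval x.1 (r.getVert k).1 := by
  intro k
  induction k with
  | zero =>
    intro h0 _ _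
    have hi0 : i = 0 := by omega
    subst hi0; rfl
  | succ k ih =>
    intro hik hk havoid
    by_cases hik' : i = k + 1
    · subst hik'; rfl
    · have h1 : fval x.1 (r.getVert i).1 = fval x.1 (r.getVert k).1 :=
        ih (by omega) (by omega) (fun l hl hl' => havoid l hl (by omega))
      have hadj : (freeProd G u).Adj (r.getVert k) (r.getVert (k+1)) :=
        r.adj_getVert_succ (by omega)
      obtain ⟨j, hc⟩ := exists_color hadj
      have h2 := fval_eq_of_color hc
        (fun he => havoid k (by omega) (by omega) (word_ext he))
        (fun he => havoid (k+1) (by omega) (by omega) (word_ext he))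
      rw [h1, h2]

/-- key lemma: a transition point of one path is a transition point of any other path
with the same endpoints. -/
theorem transition_transfer {v w : Word u (V := V)} (p q : (freeProd G u).Walk v w)
    (hpPath : p.IsPath) (hqPath : q.IsPath) (x : Word u) (hx : IsTransitionPt p x) :
    IsTransitionPt q x := by
  unfold IsTransitionPt at hx ⊢
  obtain ⟨m, hm, j, j', hjj', hxm, hc1, hc2⟩ := hx
  rw [SimpleGraph.Walk.length_darts] at hm
  rw [SimpleGraph.Walk.darts_getElem_snd' p m (by rw [SimpleGraph.Walk.length_darts]; omega)]
    at hxm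
  rw [SimpleGraph.Walk.darts_getElem_fst' p m (by rw [SimpleGraph.Walk.length_darts]; omega),
    SimpleGraph.Walk.darts_getElem_snd' p m (by rw [SimpleGraph.Walk.length_darts]; omega),
    hxm] at hc1
  rw [SimpleGraph.Walk.darts_getElem_fst' p (m+1) (by rw [SimpleGraph.Walk.length_darts]; omega),
    SimpleGraph.Walk.darts_getElem_snd' p (m+1) (by rw [SimpleGraph.Walk.length_darts]; omega),
    hxm] at hc2
  -- hc1 : HasColor G u j (p.getVert m).1 x.1
  -- hc2 : HasColor G u j' x.1 (p.getVert (m+2)).1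
  have hxv : x ≠ v := by
    intro he
    have : p.getVert (m+1) = p.getVert 0 := by rw [hxm, he, p.getVert_zero]
    have := hpPath.getVert_inj' (by omega) (by omega) this
    omega
  have hxw : x ≠ w := by
    intro he
    have : p.getVert (m+1) = p.getVert p.length := by rw [hxm, he, p.getVert_length]
    have := hpPath.getVert_inj' (by omega) (by omega) this
    omega
  have havoidp : ∀ l, l ≤ p.length → l ≠ m + 1 → p.getVert l ≠ x := by
    intro l hl hlm he
    exact hlm (hpPath.getVert_inj' hl (by omega) (by rw [he, hxm]))
  have d1 := color_det hc1
  have d2 := color_det (hasColor_symm hc2)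
  have hfv : fval x.1 v.1 = fval x.1 ((p.getVert m).1) := by
    have := fval_const (x := x) p (i := 0) m (by omega) (by omega)
      (fun l _ hl' => havoidp l (by omega) (by omega))
    rwa [p.getVert_zero] at this
  have hfw : fval x.1 ((p.getVert (m+2)).1) = fval x.1 w.1 := by
    have := fval_const (x := x) p (i := m+2) p.length (by omega) (by omega)
      (fun l hl _ => havoidp l (by omega) (by omega))
    rwa [p.getVert_length] at this
  have hfvw : fval x.1 v.1 ≠ fval x.1 w.1 := by
    intro he
    rw [hfv] at he
    rw [← hfw] at he
    rw [← he] at d2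
    exact hjj' (color_det_inj d1 d2)
  -- now transfer to q
  have hxq : x ∈ q.support := by
    by_contra hxq
    have : ∀ l, 0 ≤ l → l ≤ q.length → q.getVert l ≠ x := by
      intro l _ hl he
      exact hxq (SimpleGraph.Walk.mem_support_iff_exists_getVert.mpr ⟨l, he, hl⟩)
    have := fval_const (x := x) q (i := 0) q.length (by omega) le_rfl this
    rw [q.getVert_zero, q.getVert_length] at this
    exact hfvw this
  obtain ⟨k, hkx, hk⟩ := SimpleGraph.Walk.mem_support_iff_exists_getVert.mp hxq
  have hk0 : k ≠ 0 := by intro he; subst he; rw [q.getVert_zero] at hkx; exact hxv hkx.symm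
  have hkl : k ≠ q.length := by
    intro he; subst he; rw [q.getVert_length] at hkx; exact hxw hkx.symm
  have havoidq : ∀ l, l ≤ q.length → l ≠ k → q.getVert l ≠ x := by
    intro l hl hlm he
    exact hlm (hqPath.getVert_inj' hl (by omega) (by rw [he, ← hkx]))
  have hadj1 : (freeProd G u).Adj (q.getVert (k-1)) (q.getVert k) := by
    have := q.adj_getVert_succ (i := k - 1) (by omega)
    have hke : k - 1 + 1 = k := by omega
    rwa [hke] at this
  have hadj2 : (freeProd G u).Adj (q.getVert k) (q.getVert (k+1)) :=
    q.adj_getVert_succ (by omega)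
  obtain ⟨j₁, hd1⟩ := exists_color hadj1
  obtain ⟨j₂, hd2⟩ := exists_color hadj2
  rw [hkx] at hd1 hd2
  -- identify colors
  have hfv1 : fval x.1 v.1 = fval x.1 ((q.getVert (k-1)).1) := by
    have := fval_const (x := x) q (i := 0) (k-1) (by omega) (by omega)
      (fun l _ hl' => havoidq l (by omega) (by omega))
    rwa [q.getVert_zero] at this
  have hfw1 : fval x.1 ((q.getVert (k+1)).1) = fval x.1 w.1 := by
    have := fval_const (x := x) q (i := k+1) q.length (by omega) (by omega)
      (fun l hl _ => havoidq l (by omega) (by omega))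
    rwa [q.getVert_length] at this
  have e1 : j₁ = j := by
    have d1' := color_det hd1
    rw [← hfv1] at d1'
    rw [← hfv] at d1
    exact color_det_inj d1' d1
  have e2 : j₂ = j' := by
    have d2' := color_det (hasColor_symm hd2)
    rw [hfw1] at d2'
    rw [hfw] at d2
    exact color_det_inj d2' d2
  refine ⟨k - 1, ?_, j₁, j₂, by rw [e1, e2]; exact hjj', ?_, ?_, ?_⟩
  · rw [SimpleGraph.Walk.length_darts]; omega
  · rw [SimpleGraph.Walk.darts_getElem_snd' q (k-1)
      (by rw [SimpleGraph.Walk.length_darts]; omega)]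
    have hke : k - 1 + 1 = k := by omega
    rw [hke, hkx]
  · rw [SimpleGraph.Walk.darts_getElem_fst' q (k-1)
        (by rw [SimpleGraph.Walk.length_darts]; omega),
      SimpleGraph.Walk.darts_getElem_snd' q (k-1)
        (by rw [SimpleGraph.Walk.length_darts]; omega)]
    have hke : k - 1 + 1 = k := by omega
    rw [hke, hkx]
    exact hd1
  · rw [SimpleGraph.Walk.darts_getElem_fst' q (k-1+1)
        (by rw [SimpleGraph.Walk.length_darts]; omega),
      SimpleGraph.Walk.darts_getElem_snd' q (k-1+1)
        (by rw [SimpleGraph.Walk.length_darts]; omega)]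
    have hke : k - 1 + 1 = k := by omega
    rw [hke, hkx]
    exact hd2

end Main

/-- Any two paths of minimal length between two fixed vertices of a free
product of connected graphs have the same transition points. -/
theorem stmt10 {n : ℕ} {V : Fin n → Type} (G : ∀ i, SimpleGraph (V i))
    (u : ∀ i, V i) (hconn : ∀ i, (G i).Connected)
    {v w : Word u} (p q : (freeProd G u).Walk v w)
    (hp : ∀ r : (freeProd G u).Walk v w, p.length ≤ r.length)
    (hq : ∀ r : (freeProd G u).Walk v w, q.length ≤ r.length) :
    ∀ x : Word u, IsTransitionPt p x ↔ IsTransitionPt q x := by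
  haveI : DecidableEq (Word u) := Classical.decEq _
  have hpPath : p.IsPath := by
    have h := p.bypass_eq_self_of_length_le (hp p.bypass)
    rw [← h]; exact p.bypass_isPath
  have hqPath : q.IsPath := by
    have h := q.bypass_eq_self_of_length_le (hq q.bypass)
    rw [← h]; exact q.bypass_isPath
  intro x
  exact ⟨transition_transfer p q hpPath hqPath x, transition_transfer q p hqPath hpPath x⟩
end

section
/- For every mashup M of connected simple graphs Γ₁, …, Γₙ, and every choice of basepoint x₀ ∈ V(M), there is a surjective graph homomorphism ψ from the free product ⋆ᵢ Γᵢ (initialised at 𝐮(∅) = (φ⁻¹_{(x₀,1)}(x₀), …, φ⁻¹_{(x₀,n)}(x₀))) onto M with ψ(∅) = x₀ which intertwines the update functions: 𝐮_M(ψ(ṽ)) = 𝐮(ṽ) for all vertices ṽ. -/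
variable {ι : Type} [DecidableEq ι]

/-- A mashup of the graphs `Γ₁, …, Γₙ`: a connected graph `M` together with
sheet embeddings `φ_{(x,i)} : Γᵢ ↪ M` and the induced update function, such
that every vertex lies in its sheets, every edge lies in a sheet, sheets
coincide, are disjoint or meet in a single vertex, the `i`-sheet through a
vertex is unique, and the `j`-th update is constant along `i`-sheets. -/
structure Mashup {n : ℕ} (V : Fin n → Type) (G : ∀ i, SimpleGraph (V i)) where
  M : Type
  graph : SimpleGraph M
  conn : graph.Connected
  emb : M → ∀ i : Fin n, G i ↪g graph
  updM : M → ∀ i, V i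
  emb_upd : ∀ (x : M) (i : Fin n), emb x i (updM x i) = x
  edge_cover : ∀ a b : M, graph.Adj a b →
    ∃ (x : M) (i : Fin n) (va vb : V i), emb x i va = a ∧ emb x i vb = b
  sheets : ∀ (x y : M) (i j : Fin n),
    (i = j ∧ Set.range (emb x i) = Set.range (emb y j)) ∨
    (Set.range (emb x i) ∩ Set.range (emb y j) = ∅) ∨
    (i ≠ j ∧ ∃ z : M, Set.range (emb x i) ∩ Set.range (emb y j) = {z})
  sheet_unique : ∀ (x y : M) (i : Fin n),
    y ∈ Set.range (emb x i) → emb y i = emb x i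
  upd_const : ∀ (x : M) (i j : Fin n), i ≠ j → ∀ v : V i,
    updM (emb x i v) j = updM x j

section Aux

variable {n : ℕ} {V : Fin n → Type} {G : ∀ i, SimpleGraph (V i)}

def psiAux (Mp : Mashup V G) (x₀ : Mp.M) : List (Letter V) → Mp.M
  | [] => x₀
  | ⟨j, x⟩ :: p => Mp.emb (psiAux Mp x₀ p) j x

lemma updM_emb (Mp : Mashup V G) (y : Mp.M) (j : Fin n) (x : V j) :
    Mp.updM (Mp.emb y j x) = Function.update (Mp.updM y) j x := by
  funext i
  by_cases h : i = j
  · subst h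
    have hs : Mp.emb (Mp.emb y i x) i = Mp.emb y i :=
      Mp.sheet_unique y (Mp.emb y i x) i ⟨x, rfl⟩
    have h2 := Mp.emb_upd (Mp.emb y i x) i
    rw [hs] at h2
    have := (Mp.emb y i).injective h2
    simp [this]
  · rw [Function.update_of_ne h]
    exact Mp.upd_const y j i (fun hh => h hh.symm) x

lemma upd_psiAux (Mp : Mashup V G) (x₀ : Mp.M) (w : List (Letter V)) :
    Mp.updM (psiAux Mp x₀ w) = upd (Mp.updM x₀) w := by
  induction w with
  | nil => rfl
  | cons a p ih =>
    obtain ⟨j, x⟩ := a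
    show Mp.updM (Mp.emb (psiAux Mp x₀ p) j x) = _
    rw [updM_emb, ih]
    rfl

lemma adm_tail {u : ∀ i, V i} {a : Letter V} {p : List (Letter V)}
    (h : Adm u (a :: p)) : Adm u p :=
  ⟨h.1.tail, fun b q hq => h.2 b q (hq.trans (List.suffix_cons a p))⟩

lemma adm_cons {u : ∀ i, V i} {i : Fin n} {b : V i} {w : List (Letter V)}
    (hw : Adm u w) (hhead : ∀ c ∈ w.head?, c.1 ≠ i)
    (hb : b ≠ upd u w i) : Adm u (⟨i, b⟩ :: w) := by
  constructor
  · exact List.isChain_cons.mpr ⟨fun c hc => (hhead c hc).symm, hw.1⟩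
  · intro a p hp
    rcases List.suffix_cons_iff.mp hp with h | h
    · obtain ⟨h1, h2⟩ := List.cons_eq_cons.mp h
      subst h2; subst h1; exact hb
    · exact hw.2 a p h

lemma pre_adj (Mp : Mashup V G) (x₀ : Mp.M) {v w : List (Letter V)}
    (h : Pre G (Mp.updM x₀) v w) :
    Mp.graph.Adj (psiAux Mp x₀ v) (psiAux Mp x₀ w) := by
  rcases h with ⟨p, j, a, b, hab, hv, hw⟩ | ⟨j, a, hab, hw⟩
  · subst hv; subst hw
    exact (Mp.emb (psiAux Mp x₀ p) j).map_rel_iff.mpr hab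
  · subst hw
    have hab' : (G j).Adj (Mp.updM (psiAux Mp x₀ v) j) a := by
      rw [upd_psiAux]; exact hab
    have := (Mp.emb (psiAux Mp x₀ v) j).map_rel_iff.mpr hab'
    rwa [Mp.emb_upd] at this

lemma adj_step (Mp : Mashup V G) (x₀ : Mp.M) {w : List (Letter V)}
    (hw : Adm (Mp.updM x₀) w) {z : Mp.M}
    (hz : Mp.graph.Adj (psiAux Mp x₀ w) z) :
    ∃ w', Adm (Mp.updM x₀) w' ∧ psiAux Mp x₀ w' = z := by
  set u := Mp.updM x₀ with hu
  obtain ⟨x, i, va, vb, hva, hvb⟩ := Mp.edge_cover _ _ hz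
  have hmem : psiAux Mp x₀ w ∈ Set.range (Mp.emb x i) := ⟨va, hva⟩
  have hsheet := Mp.sheet_unique x (psiAux Mp x₀ w) i hmem
  have hz' : z = Mp.emb (psiAux Mp x₀ w) i vb := by rw [hsheet, hvb]
  -- reduce to a base word `q` with `z = emb (psi q) i vb`, head of q not i
  obtain ⟨q, hq, hqz, hqhead⟩ :
      ∃ q, Adm u q ∧ z = Mp.emb (psiAux Mp x₀ q) i vb ∧
        ∀ c ∈ q.head?, c.1 ≠ i := by
    match w, hw with
    | [], hw => exact ⟨[], hw, hz', by simp⟩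
    | (⟨j, a⟩ :: p), hw =>
      by_cases hij : j = i
      · subst hij
        have hs2 : Mp.emb (psiAux Mp x₀ (⟨j, a⟩ :: p)) j
            = Mp.emb (psiAux Mp x₀ p) j :=
          Mp.sheet_unique (psiAux Mp x₀ p) _ j ⟨a, rfl⟩
        refine ⟨p, adm_tail hw, by rw [hz', hs2], ?_⟩
        intro c hc
        have := hw.1
        cases p with
        | nil => simp at hc
        | cons c' p' =>
          simp only [List.head?_cons, Option.mem_def, Option.some.injEq] at hc
          subst hc
          exact (List.isChain_cons_cons.mp this).1.symm
      · refine ⟨⟨j, a⟩ :: p, hw, hz', ?_⟩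
        intro c hc
        simp only [List.head?_cons, Option.mem_def, Option.some.injEq] at hc
        subst hc; exact hij
  by_cases hvb' : vb = upd u q i
  · refine ⟨q, hq, ?_⟩
    rw [hqz, hvb', ← upd_psiAux, Mp.emb_upd]
  · exact ⟨⟨i, vb⟩ :: q, adm_cons hq hqhead hvb', hqz.symm⟩

end Aux

/-- Every mashup `M` of connected graphs with basepoint `x₀` is a quotient of
the free product initialised at the update of `x₀`: there is a surjective
graph homomorphism `ψ` onto `M` sending the empty word to `x₀` and
intertwining the update functions. -/
theorem stmt12 {n : ℕ} {V : Fin n → Type} {G : ∀ i, SimpleGraph (V i)}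
    (hconn : ∀ i, (G i).Connected) (Mp : Mashup V G) (x₀ : Mp.M) :
    ∃ ψ : freeProd G (Mp.updM x₀) →g Mp.graph,
      Function.Surjective ψ ∧ ψ (emptyWord (Mp.updM x₀)) = x₀ ∧
      ∀ v : Word (Mp.updM x₀), Mp.updM (ψ v) = upd (Mp.updM x₀) v.1 := by
  set u := Mp.updM x₀ with hu
  refine ⟨⟨fun v => psiAux Mp x₀ v.1, ?_⟩, ?_, rfl, ?_⟩
  · intro v w hvw
    rcases hvw with ⟨hne, h | h⟩
    · exact pre_adj Mp x₀ h
    · exact (pre_adj Mp x₀ h).symm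
  · intro y
    suffices h : ∃ w, Adm u w ∧ psiAux Mp x₀ w = y by
      obtain ⟨w, hw, hwy⟩ := h
      exact ⟨⟨w, hw⟩, hwy⟩
    obtain ⟨wk⟩ := Mp.conn.preconnected x₀ y
    have key : ∀ (a b : Mp.M) (_ : Mp.graph.Walk a b),
        (∃ w, Adm u w ∧ psiAux Mp x₀ w = a) →
        ∃ w, Adm u w ∧ psiAux Mp x₀ w = b := by
      intro a b wk
      induction wk with
      | nil => exact id
      | cons hadj p ih =>
        intro ⟨w, hw, hwa⟩
        refine ih ?_
        rw [← hwa] at hadj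
        exact adj_step Mp x₀ hw hadj
    exact key x₀ y wk ⟨[], (emptyWord u).2, rfl⟩
  · intro v
    exact upd_psiAux Mp x₀ v.1
end

section
/- Let Γ = ⋆ᵢ₌₁ⁿ Γᵢ be the free product of connected simple graphs with update function 𝐮, and for each i let αᵢ ∈ Aut(Γᵢ). Suppose β : V(Γ) → V(Γ) satisfies β(∅) = ∅ and β(ṽ·v) = β(ṽ)·β_{(ṽ,i)}(v) for letters v ∈ Vᵢ, where each β_{(ṽ,i)} ∈ Aut(Γᵢ) satisfies β_{(ṽ,i)}(u_i(ṽ)) = u_i(β(ṽ)). Then β is a graph automorphism of Γ. -/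
variable {ι : Type} [DecidableEq ι]

/-- The recursively defined map `β` on words: `β(∅) = ∅` and
`β(v·x) = β(v)·β_{(v,i)}(x)` for a letter `x` in the `i`-th factor
(words are stored in reverse, with the last letter first). -/
def betaMap {ι : Type} [DecidableEq ι] {V : ι → Type} (G : ∀ i, SimpleGraph (V i))
    (B : List (Letter V) → ∀ i, G i ≃g G i) : List (Letter V) → List (Letter V)
  | [] => []
  | ⟨i, x⟩ :: w => ⟨i, B w i x⟩ :: betaMap G B w

/-- The inverse of `betaMap`. -/
def betaInv {ι : Type} [DecidableEq ι] {V : ι → Type} (G : ∀ i, SimpleGraph (V i))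
    (B : List (Letter V) → ∀ i, G i ≃g G i) : List (Letter V) → List (Letter V)
  | [] => []
  | ⟨i, y⟩ :: w => ⟨i, (B (betaInv G B w) i).symm y⟩ :: betaInv G B w

section Helpers

variable {V : ι → Type} (G : ∀ i, SimpleGraph (V i))
  (B : List (Letter V) → ∀ i, G i ≃g G i)

lemma betaInv_betaMap (w : List (Letter V)) : betaInv G B (betaMap G B w) = w := by
  induction w with
  | nil => rfl
  | cons a w ih => obtain ⟨i, x⟩ := a; simp [betaMap, betaInv, ih]

lemma betaMap_betaInv (w : List (Letter V)) : betaMap G B (betaInv G B w) = w := by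
  induction w with
  | nil => rfl
  | cons a w ih => obtain ⟨i, x⟩ := a; simp [betaMap, betaInv, ih]

lemma betaMap_fst (w : List (Letter V)) :
    (betaMap G B w).map Sigma.fst = w.map Sigma.fst := by
  induction w with
  | nil => rfl
  | cons a w ih => obtain ⟨i, x⟩ := a; simp [betaMap, ih]

lemma betaInv_fst (w : List (Letter V)) :
    (betaInv G B w).map Sigma.fst = w.map Sigma.fst := by
  induction w with
  | nil => rfl
  | cons a w ih => obtain ⟨i, x⟩ := a; simp [betaInv, ih]

lemma suffix_betaMap {s w : List (Letter V)} (h : s <:+ betaMap G B w) :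
    ∃ t, t <:+ w ∧ s = betaMap G B t := by
  induction w generalizing s with
  | nil => exact ⟨[], List.suffix_rfl, by simpa [betaMap] using List.suffix_nil.mp h⟩
  | cons a w ih =>
    obtain ⟨i, x⟩ := a
    rcases List.suffix_cons_iff.mp h with h | h
    · exact ⟨⟨i, x⟩ :: w, List.suffix_rfl, h⟩
    · obtain ⟨t, ht, rfl⟩ := ih h
      exact ⟨t, ht.trans (List.suffix_cons _ _), rfl⟩

lemma suffix_betaInv {s w : List (Letter V)} (h : s <:+ betaInv G B w) :
    ∃ t, t <:+ w ∧ s = betaInv G B t := by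
  induction w generalizing s with
  | nil => exact ⟨[], List.suffix_rfl, by simpa [betaInv] using List.suffix_nil.mp h⟩
  | cons a w ih =>
    obtain ⟨i, x⟩ := a
    rcases List.suffix_cons_iff.mp h with h | h
    · exact ⟨⟨i, x⟩ :: w, List.suffix_rfl, h⟩
    · obtain ⟨t, ht, rfl⟩ := ih h
      exact ⟨t, ht.trans (List.suffix_cons _ _), rfl⟩

lemma Adm.suffix {u : ∀ i, V i} {w p : List (Letter V)} (h : Adm u w) (hp : p <:+ w) :
    Adm u p :=
  ⟨h.1.suffix hp, fun a q hq => h.2 a q (hq.trans hp)⟩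

/-- Head-index condition extracted from the chain' condition. -/
lemma head_cond {u : ∀ i, V i} {i : ι} {y : V i} {p : List (Letter V)}
    (h : Adm u (⟨i, y⟩ :: p)) : ∀ hne : p ≠ [], (p.head hne).1 ≠ i := by
  intro hne
  cases p with
  | nil => exact absurd rfl hne
  | cons b q => exact (List.isChain_cons_cons.mp h.1).1.symm

lemma head_cond_betaMap {u : ∀ i, V i} {i : ι} {y : V i} {p : List (Letter V)}
    (h : Adm u (⟨i, y⟩ :: p)) :
    ∀ hne : betaMap G B p ≠ [], ((betaMap G B p).head hne).1 ≠ i := by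
  intro hne
  cases p with
  | nil => exact absurd rfl hne
  | cons b q =>
    obtain ⟨j, z⟩ := b
    exact (List.isChain_cons_cons.mp h.1).1.symm

lemma head_cond_betaInv {u : ∀ i, V i} {i : ι} {y : V i} {p : List (Letter V)}
    (h : Adm u (⟨i, y⟩ :: p)) :
    ∀ hne : betaInv G B p ≠ [], ((betaInv G B p).head hne).1 ≠ i := by
  intro hne
  cases p with
  | nil => exact absurd rfl hne
  | cons b q =>
    obtain ⟨j, z⟩ := b
    exact (List.isChain_cons_cons.mp h.1).1.symm

variable {G B} {u : ∀ i, V i}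
  (hB : ∀ w : List (Letter V), Adm u w → ∀ i : ι,
      (∀ hne : w ≠ [], (w.head hne).1 ≠ i) →
      B w i (upd u w i) = upd u (betaMap G B w) i)

include hB

lemma adm_betaMap {w : List (Letter V)} (hw : Adm u w) : Adm u (betaMap G B w) := by
  constructor
  · exact (List.isChain_map Sigma.fst).mp
      (by rw [betaMap_fst]; exact (List.isChain_map Sigma.fst).mpr hw.1)
  · intro a p hap
    obtain ⟨t, ht, heq⟩ := suffix_betaMap G B hap
    cases t with
    | nil => simp [betaMap] at heq
    | cons c q =>
      obtain ⟨i, x⟩ := c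
      rw [show betaMap G B (⟨i, x⟩ :: q) = ⟨i, B q i x⟩ :: betaMap G B q from rfl] at heq
      obtain ⟨rfl, rfl⟩ : a = ⟨i, B q i x⟩ ∧ p = betaMap G B q :=
        ⟨(List.cons.injEq ..).mp heq |>.1, (List.cons.injEq ..).mp heq |>.2⟩
      have hcons : Adm u (⟨i, x⟩ :: q) := hw.suffix ht
      have hq : Adm u q := hcons.suffix (List.suffix_cons _ _)
      intro hcontra
      have : B q i x = B q i (upd u q i) := by
        rw [hB q hq i (head_cond hcons)]; exact hcontra
      exact hw.2 ⟨i, x⟩ q ht ((B q i).injective this)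

lemma adm_betaInv : ∀ (k : ℕ) (w : List (Letter V)), w.length ≤ k → Adm u w →
    Adm u (betaInv G B w) := by
  intro k
  induction k with
  | zero =>
    intro w hlen _
    rw [List.length_eq_zero_iff.mp (Nat.le_zero.mp hlen)]
    exact ⟨List.isChain_nil, by intro a p h; simpa using List.suffix_nil.mp h⟩
  | succ k ih =>
    intro w hlen hw
    constructor
    · exact (List.isChain_map Sigma.fst).mp
        (by rw [betaInv_fst]; exact (List.isChain_map Sigma.fst).mpr hw.1)
    · intro a p hap
      obtain ⟨t, ht, heq⟩ := suffix_betaInv G B hap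
      cases t with
      | nil => simp [betaInv] at heq
      | cons c q =>
        obtain ⟨i, y⟩ := c
        rw [show betaInv G B (⟨i, y⟩ :: q) =
            ⟨i, (B (betaInv G B q) i).symm y⟩ :: betaInv G B q from rfl] at heq
        obtain ⟨rfl, rfl⟩ : a = ⟨i, (B (betaInv G B q) i).symm y⟩ ∧ p = betaInv G B q :=
          ⟨(List.cons.injEq ..).mp heq |>.1, (List.cons.injEq ..).mp heq |>.2⟩
        have hcons : Adm u (⟨i, y⟩ :: q) := hw.suffix ht
        have hq : Adm u q := hcons.suffix (List.suffix_cons _ _)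
        have hqlen : q.length ≤ k := by
          have := ht.length_le
          simp only [List.length_cons] at this
          omega
        have hIq : Adm u (betaInv G B q) := ih q hqlen hq
        intro hcontra
        apply hw.2 ⟨i, y⟩ q ht
        have : y = B (betaInv G B q) i (upd u (betaInv G B q) i) := by
          rw [← hcontra, RelIso.apply_symm_apply]
        rw [this, hB (betaInv G B q) hIq i (head_cond_betaInv G B hcons),
          betaMap_betaInv]

lemma pre_betaMap {v w : List (Letter V)} (hv : Adm u v) (hw : Adm u w)
    (h : Pre G u v w) : Pre G u (betaMap G B v) (betaMap G B w) := by
  rcases h with ⟨p, j, a, b, hab, rfl, rfl⟩ | ⟨j, a, hadj, rfl⟩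
  · exact Or.inl ⟨betaMap G B p, j, B p j a, B p j b, (B p j).map_rel_iff.mpr hab, rfl, rfl⟩
  · refine Or.inr ⟨j, B v j a, ?_, rfl⟩
    rw [← hB v hv j (head_cond hw)]
    exact (B v j).map_rel_iff.mpr hadj

lemma pre_betaInv {v w : List (Letter V)} (hv : Adm u v) (hw : Adm u w)
    (h : Pre G u v w) : Pre G u (betaInv G B v) (betaInv G B w) := by
  rcases h with ⟨p, j, a, b, hab, rfl, rfl⟩ | ⟨j, a, hadj, rfl⟩
  · refine Or.inl ⟨betaInv G B p, j, (B (betaInv G B p) j).symm a,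
      (B (betaInv G B p) j).symm b, ?_, rfl, rfl⟩
    exact (B (betaInv G B p) j).symm.map_rel_iff.mpr hab
  · refine Or.inr ⟨j, (B (betaInv G B v) j).symm a, ?_, rfl⟩
    have hIv : Adm u (betaInv G B v) := adm_betaInv hB v.length v le_rfl hv
    apply (B (betaInv G B v) j).map_rel_iff.mp
    rw [RelIso.apply_symm_apply, hB (betaInv G B v) hIv j (head_cond_betaInv G B hw),
      betaMap_betaInv]
    exact hadj

end Helpers

/-- Given automorphisms `β_{(v,i)} ∈ Aut(Γᵢ)` satisfying the compatibility
condition `β_{(v,i)}(uᵢ(v)) = uᵢ(β(v))` for every vertex `v` and every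
`i ≠ λ(v)`, the recursively defined map `β` is an automorphism of the free
product. -/
theorem stmt15 {n : ℕ} {V : Fin n → Type} (G : ∀ i, SimpleGraph (V i))
    (u : ∀ i, V i) (hconn : ∀ i, (G i).Connected)
    (B : List (Letter V) → ∀ i, G i ≃g G i)
    (hB : ∀ w : List (Letter V), Adm u w → ∀ i : Fin n,
      (∀ hne : w ≠ [], (w.head hne).1 ≠ i) →
      B w i (upd u w i) = upd u (betaMap G B w) i) :
    ∃ φ : freeProd G u ≃g freeProd G u,
      ∀ v : Word u, (φ v).1 = betaMap G B v.1 := by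
  have hadmM : ∀ w : List (Letter V), Adm u w → Adm u (betaMap G B w) :=
    fun w hw => adm_betaMap hB hw
  have hadmI : ∀ w : List (Letter V), Adm u w → Adm u (betaInv G B w) :=
    fun w hw => adm_betaInv hB w.length w le_rfl hw
  refine ⟨⟨⟨fun v => ⟨betaMap G B v.1, hadmM v.1 v.2⟩,
            fun v => ⟨betaInv G B v.1, hadmI v.1 v.2⟩,
            fun v => Subtype.ext (betaInv_betaMap G B v.1),
            fun v => Subtype.ext (betaMap_betaInv G B v.1)⟩, ?_⟩, fun v => rfl⟩
  intro v w
  simp only [Equiv.coe_fn_mk, freeProd, SimpleGraph.fromRel_adj]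
  constructor
  · rintro ⟨hne, h⟩
    refine ⟨fun he => hne (by rw [he]), ?_⟩
    rcases h with h | h
    · left
      have := pre_betaInv hB (hadmM _ v.2) (hadmM _ w.2) h
      rwa [betaInv_betaMap, betaInv_betaMap] at this
    · right
      have := pre_betaInv hB (hadmM _ w.2) (hadmM _ v.2) h
      rwa [betaInv_betaMap, betaInv_betaMap] at this
  · rintro ⟨hne, h⟩
    refine ⟨?_, ?_⟩
    · intro he
      apply hne
      have h1 : betaMap G B v.1 = betaMap G B w.1 := congrArg Subtype.val he
      have h2 : v.1 = w.1 := by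
        have := congrArg (betaInv G B) h1
        rwa [betaInv_betaMap, betaInv_betaMap] at this
      exact Subtype.ext h2
    · rcases h with h | h
      · exact Or.inl (pre_betaMap hB v.2 w.2 h)
      · exact Or.inr (pre_betaMap hB w.2 v.2 h)
end

section
/- If Γ₁, …, Γₙ are connected vertex-transitive simple graphs, then their free product ⋆ᵢ Γᵢ is vertex-transitive. -/
variable {ι : Type} [DecidableEq ι]

namespace FPAux

open scoped Classical

noncomputable section

variable {V : ι → Type}

/-- apply `f` on coordinate `j`, identity elsewhere -/
def bmap (j : ι) (f : V j → V j) : ∀ i, V i → V i :=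
  Function.update (fun i => (id : V i → V i)) j f

lemma bmap_self (j : ι) (f : V j → V j) : bmap j f j = f :=
  Function.update_self _ _ _

lemma bmap_ne (j : ι) (f : V j → V j) {i : ι} (h : i ≠ j) (x : V i) :
    bmap j f i x = x := by
  simp [bmap, Function.update_of_ne h]

def vmap (j : ι) (f : V j → V j) (a : Letter V) : Letter V :=
  ⟨a.1, bmap j f a.1 a.2⟩

@[simp] lemma vmap_fst (j : ι) (f : V j → V j) (a : Letter V) :
    (vmap j f a).1 = a.1 := rfl

lemma bmap_bmap (j : ι) {f g : V j → V j} (hgf : ∀ x, g (f x) = x)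
    (i : ι) (x : V i) : bmap j g i (bmap j f i x) = x := by
  by_cases hi : i = j
  · subst hi; rw [bmap_self, bmap_self]; exact hgf x
  · rw [bmap_ne _ _ hi, bmap_ne _ _ hi]

lemma vmap_vmap (j : ι) {f g : V j → V j} (hgf : ∀ x, g (f x) = x)
    (a : Letter V) : vmap j g (vmap j f a) = a := by
  cases a with
  | mk i x => simp [vmap, bmap_bmap j hgf]

def bword (j : ι) (f : V j → V j) (u : ∀ i, V i) : List (Letter V) :=
  if f (u j) = u j then [] else [⟨j, f (u j)⟩]

def FrAux (j : ι) (f : V j → V j) (u : ∀ i, V i) : List (Letter V) → List (Letter V)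
  | [] => bword j f u
  | a :: t =>
    if vmap j f a = (⟨j, u j⟩ : Letter V) then t.map (vmap j f)
    else if a.1 = j then vmap j f a :: t.map (vmap j f)
    else bword j f u ++ (vmap j f a :: t.map (vmap j f))

def Fl (j : ι) (f : V j → V j) (u : ∀ i, V i) (w : List (Letter V)) :
    List (Letter V) :=
  (FrAux j f u w.reverse).reverse

lemma upd_cons {u : ∀ i, V i} (a : Letter V) (w : List (Letter V)) :
    upd u (a :: w) = Function.update (upd u w) a.1 a.2 := by
  cases a; rfl

@[simp] lemma bword_reverse (j : ι) (f : V j → V j) (u : ∀ i, V i) :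
    (bword j f u).reverse = bword j f u := by
  unfold bword; split <;> simp

lemma Fl_nil (j : ι) (f : V j → V j) (u : ∀ i, V i) :
    Fl j f u [] = bword j f u := by
  simp [Fl, FrAux]

lemma Fl_cons (j : ι) (f : V j → V j) (u : ∀ i, V i) (x : Letter V)
    {p : List (Letter V)} (hp : p ≠ []) :
    Fl j f u (x :: p) = vmap j f x :: Fl j f u p := by
  cases hr : p.reverse with
  | nil => exact absurd (List.reverse_eq_nil_iff.mp hr) hp
  | cons a t =>
    show (FrAux j f u (x :: p).reverse).reverse = _
    rw [List.reverse_cons, hr]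
    show (FrAux j f u (a :: (t ++ [x]))).reverse =
      vmap j f x :: (FrAux j f u p.reverse).reverse
    rw [hr]
    simp only [FrAux]
    split_ifs <;> simp

lemma Fl_singleton (j : ι) (f : V j → V j) (u : ∀ i, V i) (x : Letter V) :
    Fl j f u [x] = if vmap j f x = (⟨j, u j⟩ : Letter V) then []
      else if x.1 = j then [vmap j f x] else vmap j f x :: bword j f u := by
  simp only [Fl, List.reverse_cons, List.reverse_nil, List.nil_append, FrAux]
  split_ifs <;> simp

lemma upd_bword (j : ι) (f : V j → V j) (u : ∀ i, V i) (i : ι) :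
    upd u (bword j f u) i = bmap j f i (u i) := by
  unfold bword; split_ifs with h
  · show u i = _
    by_cases hi : i = j
    · subst hi; rw [bmap_self]; exact h.symm
    · rw [bmap_ne _ _ hi]
  · rw [upd_cons]
    by_cases hi : i = j
    · subst hi
      show Function.update (upd u []) i (f (u i)) i = _
      rw [Function.update_self, bmap_self]
    · show Function.update (upd u []) j (f (u j)) i = _
      rw [Function.update_of_ne hi, bmap_ne _ _ hi]; rfl

lemma upd_Fl (j : ι) (f : V j → V j) (u : ∀ i, V i) (w : List (Letter V))
    (i : ι) : upd u (Fl j f u w) i = bmap j f i (upd u w i) := by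
  induction w generalizing i with
  | nil => rw [Fl_nil]; exact upd_bword j f u i
  | cons x p ih =>
    rcases eq_or_ne p [] with rfl | hp
    · rw [Fl_singleton]
      split_ifs with h1 h2
      · obtain ⟨i0, x2⟩ := x
        have h1' : (⟨i0, bmap j f i0 x2⟩ : Letter V) = ⟨j, u j⟩ := h1
        injection h1' with hij hval
        subst hij
        have hval' : bmap i0 f i0 x2 = u i0 := eq_of_heq hval
        show u i = bmap i0 f i (Function.update (upd u []) i0 x2 i)
        by_cases hi : i = i0
        · subst hi
          rw [Function.update_self]
          exact hval'.symm
        · rw [Function.update_of_ne hi, bmap_ne _ _ hi]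
          rfl
      · obtain ⟨i0, x2⟩ := x
        have h2' : i0 = j := h2
        subst h2'
        show Function.update (upd u []) i0 (bmap i0 f i0 x2) i
          = bmap i0 f i (Function.update (upd u []) i0 x2 i)
        by_cases hi : i = i0
        · subst hi
          rw [Function.update_self, Function.update_self]
        · rw [Function.update_of_ne hi, Function.update_of_ne hi,
            bmap_ne _ _ hi]
      · obtain ⟨i0, x2⟩ := x
        have h2' : i0 ≠ j := h2
        show Function.update (upd u (bword j f u)) i0 (bmap j f i0 x2) i
          = bmap j f i (Function.update (upd u []) i0 x2 i)
        by_cases hi : i = i0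
        · subst hi
          rw [Function.update_self, Function.update_self, bmap_ne _ _ h2']
        · rw [Function.update_of_ne hi, Function.update_of_ne hi]
          exact upd_bword j f u i
    · rw [Fl_cons _ _ _ _ hp]
      obtain ⟨i0, x2⟩ := x
      show Function.update (upd u (Fl j f u p)) i0 (bmap j f i0 x2) i
        = bmap j f i (Function.update (upd u p) i0 x2 i)
      by_cases hi : i = i0
      · subst hi
        rw [Function.update_self, Function.update_self]
      · rw [Function.update_of_ne hi, Function.update_of_ne hi]
        exact ih i

lemma adm_nil (u : ∀ i, V i) : Adm u ([] : List (Letter V)) :=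
  ⟨List.isChain_nil, by intro a p h; simp at h⟩

lemma _root_.Adm.tail {u : ∀ i, V i} {x : Letter V} {w : List (Letter V)}
    (h : Adm u (x :: w)) : Adm u w :=
  ⟨(List.isChain_cons.mp h.1).2, fun a p hp => h.2 a p (hp.trans (List.suffix_cons _ _))⟩

lemma _root_.Adm.cons {u : ∀ i, V i} {x : Letter V} {l : List (Letter V)}
    (hl : Adm u l) (hchain : ∀ b ∈ l.head?, x.1 ≠ b.1)
    (hx : x.2 ≠ upd u l x.1) : Adm u (x :: l) := by
  refine ⟨List.isChain_cons.mpr ⟨hchain, hl.1⟩, ?_⟩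
  intro a q hq
  rcases List.suffix_cons_iff.mp hq with h | h
  · injection h with h1 h2
    subst h1; subst h2; exact hx
  · exact hl.2 a q h

lemma adm_bword (j : ι) (f : V j → V j) (u : ∀ i, V i) :
    Adm u (bword j f u) := by
  unfold bword; split_ifs with h
  · exact adm_nil u
  · refine (adm_nil u).cons (by simp) ?_
    exact h

lemma bmap_inj (j : ι) {f : V j → V j} (hf : Function.Injective f) (i : ι) :
    Function.Injective (bmap j f i) := by
  by_cases hi : i = j
  · subst hi; rw [bmap_self]; exact hf
  · intro a b hab
    rwa [bmap_ne _ _ hi, bmap_ne _ _ hi] at hab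

lemma Fl_head (j : ι) (f : V j → V j) (u : ∀ i, V i) (y : Letter V)
    (q : List (Letter V)) :
    Fl j f u (y :: q) = [] ∨ ∃ r, Fl j f u (y :: q) = vmap j f y :: r := by
  rcases eq_or_ne q [] with rfl | hq
  · rw [Fl_singleton]
    split_ifs with h1 h2
    · exact Or.inl rfl
    · exact Or.inr ⟨[], rfl⟩
    · exact Or.inr ⟨bword j f u, rfl⟩
  · exact Or.inr ⟨Fl j f u q, Fl_cons _ _ _ _ hq⟩

lemma adm_Fl (j : ι) {f : V j → V j} (hf : Function.Injective f)
    (u : ∀ i, V i) {w : List (Letter V)} (hw : Adm u w) :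
    Adm u (Fl j f u w) := by
  induction w with
  | nil => rw [Fl_nil]; exact adm_bword j f u
  | cons x p ih =>
    rcases eq_or_ne p [] with rfl | hp
    · rw [Fl_singleton]
      split_ifs with h1 h2
      · exact adm_nil u
      · refine (adm_nil u).cons (by simp) ?_
        intro heq
        apply h1
        obtain ⟨i0, x2⟩ := x
        have h2' : i0 = j := h2
        subst h2'
        show (⟨i0, bmap i0 f i0 x2⟩ : Letter V) = ⟨i0, u i0⟩
        rw [show bmap i0 f i0 x2 = u i0 from heq]
      · obtain ⟨i0, x2⟩ := x
        have h2' : i0 ≠ j := h2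
        refine (adm_bword j f u).cons ?_ ?_
        · intro b hb
          unfold bword at hb
          split_ifs at hb with hfix
          · simp at hb
          · simp at hb
            rw [← hb]
            exact h2'
        · show bmap j f i0 x2 ≠ upd u (bword j f u) i0
          rw [upd_bword, bmap_ne _ _ h2', bmap_ne _ _ h2']
          exact hw.2 ⟨i0, x2⟩ [] (by simp)
    · rw [Fl_cons _ _ _ _ hp]
      refine (ih hw.tail).cons ?_ ?_
      · intro b hb
        obtain ⟨y, q, rfl⟩ := List.exists_cons_of_ne_nil hp
        rcases Fl_head j f u y q with h | ⟨r, hr⟩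
        · rw [h] at hb; simp at hb
        · rw [hr] at hb
          simp only [List.head?_cons, Option.mem_some_iff] at hb
          subst hb
          show x.1 ≠ y.1
          exact (List.isChain_cons_cons.mp hw.1).1
      · show (vmap j f x).2 ≠ upd u (Fl j f u p) (vmap j f x).1
        rw [upd_Fl]
        intro heq
        exact hw.2 x p (List.suffix_refl _)
          (bmap_inj j hf x.1 heq)

lemma vmap_ne (j : ι) (f : V j → V j) {a : Letter V} (h : a.1 ≠ j) :
    vmap j f a = a := by
  obtain ⟨i0, x2⟩ := a
  have h' : i0 ≠ j := h
  simp [vmap, bmap_ne _ _ h']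

lemma Fl_Fl (j : ι) (e : V j ≃ V j) (u : ∀ i, V i) {w : List (Letter V)}
    (hw : Adm u w) : Fl j (⇑e.symm) u (Fl j (⇑e) u w) = w := by
  induction w with
  | nil =>
    rw [Fl_nil]
    unfold bword
    split_ifs with h
    · rw [Fl_nil]
      unfold bword
      rw [if_pos ((Equiv.symm_apply_eq e).mpr h.symm)]
    · rw [Fl_singleton, if_pos (by simp [vmap, bmap_self])]
  | cons x p ih =>
    rcases eq_or_ne p [] with rfl | hp
    · rw [Fl_singleton]
      split_ifs with h1 h2
      · -- cancellation case
        obtain ⟨i0, x2⟩ := x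
        have h1' : (⟨i0, bmap j (⇑e) i0 x2⟩ : Letter V) = ⟨j, u j⟩ := h1
        injection h1' with hij hval
        subst hij
        have hval' : e x2 = u i0 := by
          have h3 := eq_of_heq hval; rwa [bmap_self] at h3
        have hx2 : e.symm (u i0) = x2 := by rw [← hval']; simp
        have hne : e.symm (u i0) ≠ u i0 := by
          rw [hx2]; exact hw.2 ⟨i0, x2⟩ [] (by simp)
        rw [Fl_nil]
        unfold bword
        rw [if_neg hne, hx2]
      · -- x.1 = j, no cancellation
        have hxne : x ≠ (⟨j, u j⟩ : Letter V) := by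
          intro hx
          exact hw.2 x [] (by simp) (by rw [hx]; rfl)
        rw [Fl_singleton,
          if_neg (by rw [vmap_vmap j e.symm_apply_apply]; exact hxne),
          if_pos (show (vmap j (⇑e) x).1 = j from h2),
          vmap_vmap j e.symm_apply_apply]
      · -- x.1 ≠ j
        have h2' : x.1 ≠ j := h2
        rw [vmap_ne _ _ h2']
        unfold bword
        split_ifs with h
        · rw [Fl_singleton,
            if_neg (by rw [vmap_ne _ _ h2']; intro hx; exact h2' (congrArg Sigma.fst hx)),
            if_neg h2', vmap_ne _ _ h2']
          unfold bword
          rw [if_pos ((Equiv.symm_apply_eq e).mpr h.symm)]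
        · rw [Fl_cons _ _ _ _ (by simp), Fl_singleton,
            if_pos (by simp [vmap, bmap_self]), vmap_ne _ _ h2']
    · rw [Fl_cons _ _ _ _ hp]
      rcases eq_or_ne (Fl j (⇑e) u p) [] with hfp | hfp
      · -- p = [y] with cancellation
        obtain ⟨y, q, rfl⟩ := List.exists_cons_of_ne_nil hp
        rcases eq_or_ne q [] with rfl | hq
        swap
        · rw [Fl_cons _ _ _ _ hq] at hfp; simp at hfp
        have hfp0 := hfp
        rw [Fl_singleton] at hfp
        split_ifs at hfp with h1 h2
        · rw [hfp0]
          obtain ⟨i0, y2⟩ := y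
          have h1' : (⟨i0, bmap j (⇑e) i0 y2⟩ : Letter V) = ⟨j, u j⟩ := h1
          injection h1' with hij hval
          subst hij
          have hval' : e y2 = u i0 := by
            have h3 := eq_of_heq hval; rwa [bmap_self] at h3
          have hxj : x.1 ≠ i0 := (List.isChain_cons_cons.mp hw.1).1
          rw [vmap_ne _ _ hxj, Fl_singleton,
            if_neg (by rw [vmap_ne _ _ hxj]; intro hx; exact hxj (congrArg Sigma.fst hx)),
            if_neg hxj, vmap_ne _ _ hxj]
          have hy2 : e.symm (u i0) = y2 := by rw [← hval']; simp
          have hne : e.symm (u i0) ≠ u i0 := by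
            rw [hy2]
            exact hw.2 ⟨i0, y2⟩ [] (List.suffix_cons _ _)
          unfold bword
          rw [if_neg hne, hy2]
      · rw [Fl_cons _ _ _ _ hfp, vmap_vmap j e.symm_apply_apply, ih hw.tail]

section

variable (G : ∀ i, SimpleGraph (V i))

lemma bmap_adj (j : ι) (e : V j ≃ V j)
    (he : ∀ a b, (G j).Adj a b ↔ (G j).Adj (e a) (e b))
    (i : ι) (a b : V i) :
    (G i).Adj a b ↔ (G i).Adj (bmap j (⇑e) i a) (bmap j (⇑e) i b) := by
  by_cases hi : i = j
  · subst hi; rw [bmap_self]; exact he a b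
  · rw [bmap_ne _ _ hi, bmap_ne _ _ hi]

lemma pre_Fl (j : ι) (e : V j ≃ V j) (u : ∀ i, V i)
    (he : ∀ a b, (G j).Adj a b ↔ (G j).Adj (e a) (e b))
    {v w : List (Letter V)} (hv : Adm u v) (hw : Adm u w)
    (h : Pre G u v w) :
    Pre G u (Fl j (⇑e) u v) (Fl j (⇑e) u w) ∨
      Pre G u (Fl j (⇑e) u w) (Fl j (⇑e) u v) := by
  rcases h with ⟨p, k, a, b, hab, rfl, rfl⟩ | ⟨k, a, hadj, rfl⟩
  · rcases eq_or_ne p [] with rfl | hp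
    · by_cases hk : k = j
      · subst hk
        have hiffa : vmap k (⇑e) ⟨k, a⟩ = (⟨k, u k⟩ : Letter V) ↔ e a = u k := by
          simp [vmap, bmap_self]
        have hiffb : vmap k (⇑e) ⟨k, b⟩ = (⟨k, u k⟩ : Letter V) ↔ e b = u k := by
          simp [vmap, bmap_self]
        rw [Fl_singleton, Fl_singleton]
        by_cases hca : e a = u k
        · rw [if_pos (hiffa.mpr hca), if_neg (fun hc => (hab.ne (e.injective (hca.trans (hiffb.mp hc).symm))).elim)]
          rw [if_pos (show (Sigma.mk k b).1 = k from rfl)]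
          refine Or.inl (Or.inr ⟨k, (vmap k (⇑e) ⟨k, b⟩).2, ?_, rfl⟩)
          show (G k).Adj (upd u [] k) (bmap k (⇑e) k b)
          rw [bmap_self]
          show (G k).Adj (u k) (e b)
          rw [← hca]
          exact (he a b).mp hab
        · rw [if_neg (fun hc => hca (hiffa.mp hc))]
          rw [if_pos (show (Sigma.mk k a).1 = k from rfl)]
          by_cases hcb : e b = u k
          · rw [if_pos (hiffb.mpr hcb)]
            refine Or.inr (Or.inr ⟨k, (vmap k (⇑e) ⟨k, a⟩).2, ?_, rfl⟩)
            show (G k).Adj (upd u [] k) (bmap k (⇑e) k a)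
            rw [bmap_self]
            show (G k).Adj (u k) (e a)
            rw [← hcb]
            exact ((he a b).mp hab).symm
          · rw [if_neg (fun hc => hcb (hiffb.mp hc))]
            rw [if_pos (show (Sigma.mk k b).1 = k from rfl)]
            refine Or.inl (Or.inl ⟨[], k, (vmap k (⇑e) ⟨k, a⟩).2,
              (vmap k (⇑e) ⟨k, b⟩).2, ?_, ?_, ?_⟩)
            · show (G k).Adj (bmap k (⇑e) k a) (bmap k (⇑e) k b)
              rw [bmap_self]
              exact (he a b).mp hab
            · rfl
            · rfl
      · rw [Fl_singleton, Fl_singleton,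
          if_neg (fun hc : vmap j (⇑e) ⟨k, a⟩ = (⟨j, u j⟩ : Letter V) => hk (congrArg Sigma.fst hc)),
          if_neg (fun hc : vmap j (⇑e) ⟨k, b⟩ = (⟨j, u j⟩ : Letter V) => hk (congrArg Sigma.fst hc)),
          if_neg (show ¬(Sigma.mk k a).1 = j from hk),
          if_neg (show ¬(Sigma.mk k b).1 = j from hk),
          vmap_ne _ _ (show (Sigma.mk k a).1 ≠ j from hk),
          vmap_ne _ _ (show (Sigma.mk k b).1 ≠ j from hk)]
        exact Or.inl (Or.inl ⟨bword j (⇑e) u, k, a, b, hab, rfl, rfl⟩)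
    · rw [Fl_cons _ _ _ _ hp, Fl_cons _ _ _ _ hp]
      refine Or.inl (Or.inl ⟨Fl j (⇑e) u p, k, (vmap j (⇑e) ⟨k, a⟩).2,
        (vmap j (⇑e) ⟨k, b⟩).2, ?_, rfl, rfl⟩)
      show (G k).Adj (bmap j (⇑e) k a) (bmap j (⇑e) k b)
      exact (bmap_adj G j e he k a b).mp hab
  · rcases eq_or_ne v [] with rfl | hv'
    · rw [Fl_nil, Fl_singleton]
      have ha : a ≠ u k := hw.2 ⟨k, a⟩ [] (by simp)
      by_cases hk : k = j
      · subst hk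
        have hiffa : vmap k (⇑e) ⟨k, a⟩ = (⟨k, u k⟩ : Letter V) ↔ e a = u k := by
          simp [vmap, bmap_self]
        by_cases hca : e a = u k
        · rw [if_pos (hiffa.mpr hca)]
          have hbu : ¬ e (u k) = u k := fun hc => ha (e.injective (hca.trans hc.symm))
          unfold bword
          rw [if_neg hbu]
          refine Or.inr (Or.inr ⟨k, e (u k), ?_, rfl⟩)
          show (G k).Adj (upd u [] k) (e (u k))
          show (G k).Adj (u k) (e (u k))
          have h5 : (G k).Adj (e a) (e (u k)) := (he a (u k)).mp hadj.symm
          rwa [hca] at h5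
        · rw [if_neg (fun hc => hca (hiffa.mp hc))]
          rw [if_pos (show (Sigma.mk k a).1 = k from rfl)]
          unfold bword
          split_ifs with hbu
          · refine Or.inl (Or.inr ⟨k, (vmap k (⇑e) ⟨k, a⟩).2, ?_, rfl⟩)
            show (G k).Adj (upd u [] k) (bmap k (⇑e) k a)
            rw [bmap_self]
            show (G k).Adj (u k) (e a)
            rw [← hbu]
            exact (he _ _).mp hadj
          · refine Or.inl (Or.inl ⟨[], k, e (u k), (vmap k (⇑e) ⟨k, a⟩).2, ?_, rfl, ?_⟩)
            · show (G k).Adj (e (u k)) (bmap k (⇑e) k a)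
              rw [bmap_self]
              exact (he _ _).mp hadj
            · rfl
      · rw [if_neg (fun hc : vmap j (⇑e) ⟨k, a⟩ = (⟨j, u j⟩ : Letter V) => hk (congrArg Sigma.fst hc)),
          if_neg (show ¬(Sigma.mk k a).1 = j from hk),
          vmap_ne _ _ (show (Sigma.mk k a).1 ≠ j from hk)]
        refine Or.inl (Or.inr ⟨k, a, ?_, rfl⟩)
        rw [show upd u (bword j (⇑e) u) k = bmap j (⇑e) k (u k) from upd_bword _ _ _ _,
          bmap_ne _ _ hk]
        exact hadj
    · rw [Fl_cons _ _ _ _ hv']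
      refine Or.inl (Or.inr ⟨k, (vmap j (⇑e) ⟨k, a⟩).2, ?_, rfl⟩)
      show (G k).Adj (upd u (Fl j (⇑e) u v) k) (bmap j (⇑e) k a)
      rw [upd_Fl]
      exact (bmap_adj G j e he k _ a).mp hadj

end

section

variable (G : ∀ i, SimpleGraph (V i))

lemma adj_Fl (j : ι) (e : V j ≃ V j) (u : ∀ i, V i)
    (he : ∀ a b, (G j).Adj a b ↔ (G j).Adj (e a) (e b))
    {x y : Word u} (h : (freeProd G u).Adj x y)
    (hx' : Adm u (Fl j (⇑e) u x.1)) (hy' : Adm u (Fl j (⇑e) u y.1)) :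
    (freeProd G u).Adj ⟨Fl j (⇑e) u x.1, hx'⟩ ⟨Fl j (⇑e) u y.1, hy'⟩ := by
  simp only [freeProd, SimpleGraph.fromRel_adj] at h ⊢
  obtain ⟨hne, hpre⟩ := h
  constructor
  · intro hc
    apply hne
    apply Subtype.ext
    have hc' : Fl j (⇑e) u x.1 = Fl j (⇑e) u y.1 := congrArg Subtype.val hc
    have := congrArg (Fl j (⇑e.symm) u) hc'
    rwa [Fl_Fl j e u x.2, Fl_Fl j e u y.2] at this
  · rcases hpre with h1 | h1
    · exact pre_Fl G j e u he x.2 y.2 h1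
    · exact (pre_Fl G j e u he y.2 x.2 h1).symm

noncomputable def wmap (j : ι) (e : V j ≃ V j) (u : ∀ i, V i) :
    Word u → Word u :=
  fun x => ⟨Fl j (⇑e) u x.1, adm_Fl j e.injective u x.2⟩

lemma wmap_wmap (j : ι) (e : V j ≃ V j) (u : ∀ i, V i) (x : Word u) :
    wmap j e.symm u (wmap j e u x) = x :=
  Subtype.ext (Fl_Fl j e u x.2)

lemma adj_wmap (j : ι) (e : V j ≃ V j) (u : ∀ i, V i)
    (he : ∀ a b, (G j).Adj a b ↔ (G j).Adj (e a) (e b))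
    {x y : Word u} (h : (freeProd G u).Adj x y) :
    (freeProd G u).Adj (wmap j e u x) (wmap j e u y) :=
  adj_Fl G j e u he h _ _

noncomputable def flIso (j : ι) (e : V j ≃ V j) (u : ∀ i, V i)
    (he : ∀ a b, (G j).Adj a b ↔ (G j).Adj (e a) (e b)) :
    freeProd G u ≃g freeProd G u := by
  have he' : ∀ a b, (G j).Adj a b ↔ (G j).Adj (e.symm a) (e.symm b) := by
    intro a b
    simpa using (he (e.symm a) (e.symm b)).symm
  exact
  { toFun := wmap j e u
    invFun := wmap j e.symm u
    left_inv := fun x => wmap_wmap j e u x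
    right_inv := fun x => by
      have h2 := wmap_wmap j e.symm u x
      simpa using h2
    map_rel_iff' := by
      intro x y
      simp only [Equiv.coe_fn_mk]
      constructor
      · intro h
        have h2 := adj_wmap G j e.symm u he' h
        rwa [wmap_wmap j e u x, wmap_wmap j e u y] at h2
      · intro h
        exact adj_wmap G j e u he h }

lemma flIso_apply (j : ι) (e : V j ≃ V j) (u : ∀ i, V i)
    (he : ∀ a b, (G j).Adj a b ↔ (G j).Adj (e a) (e b)) (x : Word u) :
    flIso G j e u he x = wmap j e u x := rfl

lemma Fl_cancel_last (j : ι) (f : V j → V j) (u : ∀ i, V i)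
    (p : List (Letter V)) (a : V j) (hfa : f a = u j) :
    Fl j f u (p ++ [⟨j, a⟩]) = p.map (vmap j f) := by
  unfold Fl
  have hrev : (p ++ ([⟨j, a⟩] : List (Letter V))).reverse = ⟨j, a⟩ :: p.reverse := by simp
  rw [hrev]
  simp only [FrAux]
  rw [if_pos (by simp [vmap, bmap_self, hfa])]
  rw [← List.map_reverse, List.reverse_reverse]

lemma exists_iso_to_empty (u : ∀ i, V i)
    (htrans : ∀ i, ∀ a b : V i, ∃ α : G i ≃g G i, α a = b) (x : Word u) :
    ∃ φ : freeProd G u ≃g freeProd G u, φ x = emptyWord u := by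
  suffices H : ∀ (N : ℕ) (w : List (Letter V)) (hw : Adm u w), w.length ≤ N →
      ∃ φ : freeProd G u ≃g freeProd G u, φ ⟨w, hw⟩ = emptyWord u by
    obtain ⟨w, hw⟩ := x
    exact H w.length w hw le_rfl
  intro N
  induction N with
  | zero =>
    intro w hw hlen
    have : w = [] := List.eq_nil_of_length_eq_zero (Nat.le_zero.mp hlen)
    subst this
    exact ⟨RelIso.refl _, Subtype.ext rfl⟩
  | succ N ih =>
    intro w hw hlen
    rcases List.eq_nil_or_concat w with rfl | ⟨p, a0, hcat⟩
    · exact ⟨RelIso.refl _, Subtype.ext rfl⟩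
    · have hcat' : w = p ++ [a0] := by simpa using hcat
      subst hcat'
      obtain ⟨i0, c⟩ := a0
      have hc : c ≠ u i0 := hw.2 ⟨i0, c⟩ [] (List.suffix_append p _)
      obtain ⟨α, hα⟩ := htrans i0 c (u i0)
      have he : ∀ a b, (G i0).Adj a b ↔ (G i0).Adj (α.toEquiv a) (α.toEquiv b) :=
        fun a b => (SimpleGraph.Iso.map_adj_iff α).symm
      set Φ := flIso G i0 α.toEquiv u he with hΦ
      have hval : (Φ ⟨p ++ [⟨i0, c⟩], hw⟩).1 = p.map (vmap i0 (⇑α.toEquiv)) :=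
        Fl_cancel_last i0 _ u p c hα
      have hlen2 : (p.map (vmap i0 (⇑α.toEquiv))).length ≤ N := by
        rw [List.length_map]
        have := hlen
        simp only [List.length_append, List.length_singleton] at this
        omega
      obtain ⟨ψ, hψ⟩ := ih (p.map (vmap i0 (⇑α.toEquiv)))
        (hval ▸ (Φ ⟨p ++ [⟨i0, c⟩], hw⟩).2) hlen2
      refine ⟨Φ.trans ψ, ?_⟩
      have hΦx : Φ ⟨p ++ [⟨i0, c⟩], hw⟩
          = ⟨p.map (vmap i0 (⇑α.toEquiv)), hval ▸ (Φ ⟨p ++ [⟨i0, c⟩], hw⟩).2⟩ :=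
        Subtype.ext hval
      show ψ (Φ ⟨p ++ [⟨i0, c⟩], hw⟩) = emptyWord u
      rw [hΦx]
      exact hψ

end

end

end FPAux

/-- The free product of connected vertex-transitive graphs is
vertex-transitive. -/
theorem stmt16 {n : ℕ} {V : Fin n → Type} (G : ∀ i, SimpleGraph (V i))
    (u : ∀ i, V i) (hconn : ∀ i, (G i).Connected)
    (htrans : ∀ i, ∀ a b : V i, ∃ α : G i ≃g G i, α a = b) :
    ∀ x y : Word u, ∃ φ : freeProd G u ≃g freeProd G u, φ x = y := by
  intro x y
  obtain ⟨φx, hφx⟩ := FPAux.exists_iso_to_empty G u htrans x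
  obtain ⟨φy, hφy⟩ := FPAux.exists_iso_to_empty G u htrans y
  refine ⟨φx.trans φy.symm, ?_⟩
  show φy.symm (φx x) = y
  rw [hφx, ← hφy]
  exact φy.symm_apply_apply y
end

section
/- Let Γ₁, …, Γₙ (n ≥ 3) be connected simple graphs each with at least two vertices, and suppose two of the factors are isomorphic. Then the automorphism group of ⋆ᵢ Γᵢ is non-discrete: for every k there exists a nontrivial automorphism fixing pointwise the ball of radius k around the base vertex ∅. -/
variable {ι : Type} [DecidableEq ι]

namespace FP

set_option linter.unusedSectionVars false

variable {V : ι → Type} {G : ∀ i, SimpleGraph (V i)} {u : ∀ i, V i} {i j : ι}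

def tau (f : G i ≃g G j) : Letter V → Letter V
  | ⟨m, x⟩ =>
    if h : m = i then ⟨j, f (h ▸ x)⟩
    else if h' : m = j then ⟨i, f.symm (h' ▸ x)⟩
    else ⟨m, x⟩

lemma tau_i (f : G i ≃g G j) (x : V i) : tau f ⟨i, x⟩ = ⟨j, f x⟩ := by simp [tau]

lemma tau_j (f : G i ≃g G j) (hij : i ≠ j) (y : V j) :
    tau f ⟨j, y⟩ = ⟨i, f.symm y⟩ := by simp [tau, hij.symm]

lemma tau_o (f : G i ≃g G j) {m : ι} (hmi : m ≠ i) (hmj : m ≠ j) (x : V m) :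
    tau f ⟨m, x⟩ = ⟨m, x⟩ := by simp [tau, hmi, hmj]

lemma tau_fst (f : G i ≃g G j) (hij : i ≠ j) (a : Letter V) :
    (tau f a).1 = Equiv.swap i j a.1 := by
  obtain ⟨m, x⟩ := a
  by_cases hmi : m = i
  · subst hmi; rw [tau_i]; simp [Equiv.swap_apply_left]
  · by_cases hmj : m = j
    · subst hmj; rw [tau_j f hij]; simp [Equiv.swap_apply_right]
    · rw [tau_o f hmi hmj]; simp [Equiv.swap_apply_of_ne_of_ne hmi hmj]

lemma tau_invol (f : G i ≃g G j) (hij : i ≠ j) : Function.Involutive (tau f) := by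
  intro a
  obtain ⟨m, x⟩ := a
  by_cases hmi : m = i
  · subst hmi; rw [tau_i, tau_j f hij]; simp
  · by_cases hmj : m = j
    · subst hmj; rw [tau_j f hij, tau_i]; simp
    · rw [tau_o f hmi hmj, tau_o f hmi hmj]

def Fv (f : G i ≃g G j) (v : ∀ m, V m) : ∀ m, V m :=
  Function.update (Function.update v i (f.symm (v j))) j (f (v i))

lemma Fv_i (f : G i ≃g G j) (hij : i ≠ j) (v : ∀ m, V m) : Fv f v i = f.symm (v j) := by
  simp [Fv, Function.update_of_ne hij]

lemma Fv_j (f : G i ≃g G j) (v : ∀ m, V m) : Fv f v j = f (v i) := by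
  simp [Fv]

lemma Fv_o (f : G i ≃g G j) {m : ι} (hmi : m ≠ i) (hmj : m ≠ j) (v : ∀ m, V m) :
    Fv f v m = v m := by
  simp [Fv, Function.update_of_ne hmj, Function.update_of_ne hmi]

lemma upd_cons (u : ∀ m, V m) (a : Letter V) (w : List (Letter V)) :
    upd u (a :: w) = Function.update (upd u w) a.1 a.2 := by cases a; rfl

lemma Fv_update_i (f : G i ≃g G j) (hij : i ≠ j) (v : ∀ m, V m) (x : V i) :
    Fv f (Function.update v i x) = Function.update (Fv f v) j (f x) := by
  funext m
  by_cases h1 : m = i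
  · rw [h1, Fv_i f hij, Function.update_of_ne hij.symm, Function.update_of_ne hij,
      Fv_i f hij]
  · by_cases h2 : m = j
    · rw [h2, Fv_j, Function.update_self, Function.update_self]
    · rw [Function.update_of_ne h2, Fv_o f h1 h2, Fv_o f h1 h2,
        Function.update_of_ne h1]

lemma Fv_update_j (f : G i ≃g G j) (hij : i ≠ j) (v : ∀ m, V m) (y : V j) :
    Fv f (Function.update v j y) = Function.update (Fv f v) i (f.symm y) := by
  funext m
  by_cases h1 : m = i
  · rw [h1, Fv_i f hij, Function.update_self, Function.update_self]
  · by_cases h2 : m = j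
    · rw [h2, Fv_j, Function.update_of_ne hij, Function.update_of_ne hij.symm, Fv_j]
    · rw [Function.update_of_ne h1, Fv_o f h1 h2, Fv_o f h1 h2,
        Function.update_of_ne h2]

lemma Fv_update_o (f : G i ≃g G j) (hij : i ≠ j) {c : ι} (hci : c ≠ i) (hcj : c ≠ j)
    (v : ∀ m, V m) (x : V c) :
    Fv f (Function.update v c x) = Function.update (Fv f v) c x := by
  funext m
  by_cases h1 : m = i
  · rw [h1, Function.update_of_ne hci.symm, Fv_i f hij, Fv_i f hij,
      Function.update_of_ne hcj.symm]
  · by_cases h2 : m = j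
    · rw [h2, Function.update_of_ne hcj.symm, Fv_j, Fv_j, Function.update_of_ne hci.symm]
    · by_cases h3 : m = c
      · rw [h3, Function.update_self, Fv_o f (h1 ∘ (h3.symm ▸ ·)) (h2 ∘ (h3.symm ▸ ·)),
          Function.update_self]
      · rw [Function.update_of_ne h3, Fv_o f h1 h2, Fv_o f h1 h2,
          Function.update_of_ne h3]

/-- Key invariant: mapping the prefix by `tau` twists `upd` by `Fv`. -/
lemma upd_map_tau (f : G i ≃g G j) (hij : i ≠ j) {p : List (Letter V)}
    (hbase : upd u p j = f (upd u p i)) :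
    ∀ q : List (Letter V), upd u (q.map (tau f) ++ p) = Fv f (upd u (q ++ p)) := by
  intro q
  induction q with
  | nil =>
    simp only [List.map_nil, List.nil_append]
    funext m
    by_cases hmi : m = i
    · rw [hmi, Fv_i f hij, hbase, f.symm_apply_apply]
    · by_cases hmj : m = j
      · rw [hmj, Fv_j, hbase]
      · rw [Fv_o f hmi hmj]
  | cons a q ih =>
    obtain ⟨m, x⟩ := a
    by_cases hmi : m = i
    · subst hmi
      rw [List.map_cons, List.cons_append, List.cons_append, tau_i, upd_cons, upd_cons,
        ih, Fv_update_i f hij]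
    · by_cases hmj : m = j
      · subst hmj
        rw [List.map_cons, List.cons_append, List.cons_append, tau_j f hij, upd_cons,
          upd_cons, ih, Fv_update_j f hij]
      · rw [List.map_cons, List.cons_append, List.cons_append, tau_o f hmi hmj, upd_cons,
          upd_cons, ih, Fv_update_o f hij hmi hmj]




lemma suffix_append_cases {α : Type*} {l q p : List α} (h : l <:+ q ++ p) :
    l <:+ p ∨ ∃ q', q' <:+ q ∧ q' ≠ [] ∧ l = q' ++ p := by
  induction q with
  | nil => exact Or.inl h
  | cons a q ih =>
    rcases List.suffix_cons_iff.mp h with h1 | h2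
    · exact Or.inr ⟨a :: q, List.suffix_refl _, by simp, by simpa using h1⟩
    · rcases ih h2 with h3 | ⟨q', hq', hne, rfl⟩
      · exact Or.inl h3
      · exact Or.inr ⟨q', hq'.trans (List.suffix_cons a q), hne, rfl⟩

lemma adm_cons {a : Letter V} {l : List (Letter V)} (hl : Adm u l)
    (hchain : ∀ b ∈ l.head?, a.1 ≠ b.1) (hval : a.2 ≠ upd u l a.1) :
    Adm u (a :: l) := by
  refine ⟨List.isChain_cons.mpr ⟨hchain, hl.1⟩, ?_⟩
  intro b q hsuff
  rcases List.suffix_cons_iff.mp hsuff with h1 | h2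
  · obtain ⟨rfl, rfl⟩ : b = a ∧ q = l := by
      constructor <;> [exact (List.cons.injEq _ _ _ _ ▸ h1).1; exact (List.cons.injEq _ _ _ _ ▸ h1).2]
    exact hval
  · exact hl.2 b q h2

lemma adm_tail {a : Letter V} {l : List (Letter V)} (h : Adm u (a :: l)) : Adm u l :=
  ⟨h.1.tail, fun b q hs => h.2 b q (hs.trans (List.suffix_cons a l))⟩

lemma upd_apply_of_not_mem {l : List (Letter V)} {m : ι} (h : ∀ b ∈ l, b.1 ≠ m) :
    upd u l m = u m := by
  induction l with
  | nil => rfl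
  | cons a l ih =>
    obtain ⟨c, x⟩ := a
    rw [upd, Function.update_of_ne (fun hh => h _ List.mem_cons_self (by simpa using hh.symm)) ]
    · exact ih (fun b hb => h b (List.mem_cons_of_mem _ hb))


section Swap

open scoped Classical

variable (f : G i ≃g G j) (p : List (Letter V))

def IsBr (i j : ι) (p : List (Letter V)) (w : List (Letter V)) : Prop :=
  ∃ q l, w = q ++ p ∧ q.getLast? = some l ∧ (l.1 = i ∨ l.1 = j)

noncomputable def swapFun (w : List (Letter V)) : List (Letter V) :=
  if IsBr i j p w then (w.take (w.length - p.length)).map (tau f) ++ p else w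

lemma swapFun_eq (q : List (Letter V)) (l : Letter V) (hl : q.getLast? = some l)
    (hd : l.1 = i ∨ l.1 = j) : swapFun f p (q ++ p) = q.map (tau f) ++ p := by
  rw [swapFun, if_pos ⟨q, l, rfl, hl, hd⟩]
  congr 2
  rw [List.length_append, Nat.add_sub_cancel, List.take_left]

lemma swapFun_eq_not {w : List (Letter V)} (h : ¬ IsBr i j p w) : swapFun f p w = w := by
  rw [swapFun, if_neg h]

lemma isBr_last {q : List (Letter V)} {l : Letter V} (hl : q.getLast? = some l)
    (h : IsBr i j p (q ++ p)) : l.1 = i ∨ l.1 = j := by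
  obtain ⟨q2, l2, heq, hl2, hd2⟩ := h
  obtain rfl : q = q2 := List.append_cancel_right heq
  rw [hl] at hl2
  obtain rfl : l = l2 := by injection hl2
  exact hd2

lemma swapFun_invol (hij : i ≠ j) (w : List (Letter V)) :
    swapFun f p (swapFun f p w) = w := by
  by_cases h : IsBr i j p w
  · obtain ⟨q, l, rfl, hl, hd⟩ := h
    rw [swapFun_eq f p q l hl hd]
    have hl' : (q.map (tau f)).getLast? = some (tau f l) := by
      rw [List.getLast?_map, hl, Option.map_some]
    have hd' : (tau f l).1 = i ∨ (tau f l).1 = j := by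
      rw [tau_fst f hij]
      rcases hd with h1 | h1 <;> rw [h1]
      · exact Or.inr (Equiv.swap_apply_left i j)
      · exact Or.inl (Equiv.swap_apply_right i j)
    rw [swapFun_eq f p _ (tau f l) hl' hd', List.map_map,
      Function.Involutive.comp_self (tau_invol f hij), List.map_id]
  · rw [swapFun_eq_not f p h, swapFun_eq_not f p h]

lemma adm_swap (hij : i ≠ j) (hhead : ∀ b ∈ p.head?, b.1 ≠ i ∧ b.1 ≠ j)
    (hbase : upd u p j = f (upd u p i)) :
    ∀ q, Adm u (q ++ p) → Adm u (q.map (tau f) ++ p) := by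
  intro q hq
  induction q with
  | nil => simpa using hq
  | cons a q ih =>
    have hq0 : Adm u (a :: (q ++ p)) := by rwa [List.cons_append] at hq
    have hq' : Adm u (q ++ p) := adm_tail hq0
    have hch := List.isChain_cons.mp hq0.1
    rw [List.map_cons, List.cons_append]
    refine adm_cons (ih hq') ?_ ?_
    · intro b hb
      rw [tau_fst f hij]
      cases q with
      | nil =>
        have hb' : b ∈ p.head? := by simpa using hb
        have h1 := hch.1 b (by simpa using hb')
        have h2 := hhead b hb'
        intro hcon
        rcases Decidable.eq_or_ne a.1 i with hai | hai
        · rw [hai, Equiv.swap_apply_left] at hcon; exact h2.2 hcon.symm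
        · rcases Decidable.eq_or_ne a.1 j with haj | haj
          · rw [haj, Equiv.swap_apply_right] at hcon; exact h2.1 hcon.symm
          · rw [Equiv.swap_apply_of_ne_of_ne hai haj] at hcon; exact h1 hcon
      | cons c q2 =>
        have hb' : b = tau f c := by
          simp only [List.map_cons, List.cons_append, List.head?_cons,
            Option.mem_def, Option.some.injEq] at hb
          exact hb.symm
        have h1 : a.1 ≠ c.1 := hch.1 c (by simp)
        rw [hb', tau_fst f hij]
        exact fun hcon => h1 (Equiv.injective _ hcon)
    · rw [upd_map_tau f hij hbase q]
      obtain ⟨m, x⟩ := a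
      have horig : x ≠ upd u (q ++ p) m := by
        refine hq0.2 ⟨m, x⟩ (q ++ p) (List.suffix_refl _)
      rcases Decidable.eq_or_ne m i with hmi | hmi
      · subst hmi
        rw [tau_i]
        show f x ≠ Fv f (upd u (q ++ p)) j
        rw [Fv_j]
        exact fun hcon => horig (f.injective hcon)
      · rcases Decidable.eq_or_ne m j with hmj | hmj
        · subst hmj
          rw [tau_j f hij]
          show f.symm x ≠ Fv f (upd u (q ++ p)) i
          rw [Fv_i f hij]
          exact fun hcon => horig (f.symm.injective hcon)
        · rw [tau_o f hmi hmj]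
          show x ≠ Fv f (upd u (q ++ p)) m
          rw [Fv_o f hmi hmj]
          exact horig

lemma isBr_cons_ex {a : Letter V} {r : List (Letter V)} (h : IsBr i j p (a :: r)) :
    ∃ q', r = q' ++ p := by
  obtain ⟨q, l, heq, hl, _⟩ := h
  cases q with
  | nil => simp at hl
  | cons c q2 =>
    rw [List.cons_append] at heq
    exact ⟨q2, by injection heq⟩

lemma isBr_nil_q (h : IsBr i j p p) : False := by
  obtain ⟨q, l, heq, hl, _⟩ := h
  obtain rfl : ([] : List (Letter V)) = q :=
    List.append_cancel_right (by simpa using heq : [] ++ p = q ++ p)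
  simp at hl

lemma pre_swap (hij : i ≠ j) (hbase : upd u p j = f (upd u p i))
    {v w : List (Letter V)} (hpre : Pre G u v w) :
    Pre G u (swapFun f p v) (swapFun f p w) := by
  rcases hpre with ⟨r, m, a, b, hab, rfl, rfl⟩ | ⟨m, a, hadj, rfl⟩
  · -- type 1 edge
    by_cases h1 : ∃ q', r = q' ++ p
    · obtain ⟨q', rfl⟩ := h1
      cases q' with
      | nil =>
        simp only [List.nil_append]
        by_cases hm : m = i ∨ m = j
        · have ea : swapFun f p (⟨m, a⟩ :: p) = [tau f ⟨m, a⟩] ++ p := by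
            simpa using swapFun_eq f p [⟨m, a⟩] ⟨m, a⟩ (by simp) hm
          have eb : swapFun f p (⟨m, b⟩ :: p) = [tau f ⟨m, b⟩] ++ p := by
            simpa using swapFun_eq f p [⟨m, b⟩] ⟨m, b⟩ (by simp) hm
          rw [ea, eb]
          rcases hm with rfl | rfl
          · exact Or.inl ⟨p, j, f a, f b, f.map_adj_iff.mpr hab,
              by rw [tau_i, List.singleton_append], by rw [tau_i, List.singleton_append]⟩
          · exact Or.inl ⟨p, i, f.symm a, f.symm b, f.symm.map_adj_iff.mpr hab,
              by rw [tau_j f hij, List.singleton_append],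
              by rw [tau_j f hij, List.singleton_append]⟩
        · have ha : ¬ IsBr i j p (⟨m, a⟩ :: p) := fun hbr =>
            hm (isBr_last p (q := [⟨m, a⟩]) (l := ⟨m, a⟩) (by simp) hbr)
          have hb : ¬ IsBr i j p (⟨m, b⟩ :: p) := fun hbr =>
            hm (isBr_last p (q := [⟨m, b⟩]) (l := ⟨m, b⟩) (by simp) hbr)
          rw [swapFun_eq_not f p ha, swapFun_eq_not f p hb]
          exact Or.inl ⟨p, m, a, b, hab, rfl, rfl⟩
      | cons c q2 =>
        by_cases hm : ∃ l, (c :: q2).getLast? = some l ∧ (l.1 = i ∨ l.1 = j)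
        · obtain ⟨l, hl, hd⟩ := hm
          have hl2a : (⟨m, a⟩ :: c :: q2).getLast? = some l := by
            rw [List.getLast?_cons_cons]; exact hl
          have hl2b : (⟨m, b⟩ :: c :: q2).getLast? = some l := by
            rw [List.getLast?_cons_cons]; exact hl
          have ea : swapFun f p (⟨m, a⟩ :: (c :: q2) ++ p)
              = tau f ⟨m, a⟩ :: ((c :: q2).map (tau f) ++ p) :=
            swapFun_eq f p (⟨m, a⟩ :: c :: q2) l hl2a hd
          have eb : swapFun f p (⟨m, b⟩ :: (c :: q2) ++ p)
              = tau f ⟨m, b⟩ :: ((c :: q2).map (tau f) ++ p) :=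
            swapFun_eq f p (⟨m, b⟩ :: c :: q2) l hl2b hd
          simp only [List.cons_append] at ea eb ⊢
          rw [ea, eb]
          by_cases hmi : m = i
          · subst hmi
            exact Or.inl ⟨_, j, f a, f b, f.map_adj_iff.mpr hab,
              by rw [tau_i], by rw [tau_i]⟩
          · by_cases hmj : m = j
            · subst hmj
              exact Or.inl ⟨_, i, f.symm a, f.symm b, f.symm.map_adj_iff.mpr hab,
                by rw [tau_j f hij], by rw [tau_j f hij]⟩
            · exact Or.inl ⟨_, m, a, b, hab,
                by rw [tau_o f hmi hmj], by rw [tau_o f hmi hmj]⟩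
        · push_neg at hm
          obtain ⟨l0, hl0⟩ : ∃ l0, (c :: q2).getLast? = some l0 :=
            ⟨(c :: q2).getLast (by simp), List.getLast?_eq_getLast _⟩
          have ha : ¬ IsBr i j p (⟨m, a⟩ :: (c :: q2) ++ p) := fun hbr =>
            ((isBr_last p (q := ⟨m, a⟩ :: c :: q2) (l := l0)
              (by rw [List.getLast?_cons_cons]; exact hl0)
              (by rwa [List.cons_append] at hbr)).elim (hm l0 hl0).1 (hm l0 hl0).2)
          have hb : ¬ IsBr i j p (⟨m, b⟩ :: (c :: q2) ++ p) := fun hbr =>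
            ((isBr_last p (q := ⟨m, b⟩ :: c :: q2) (l := l0)
              (by rw [List.getLast?_cons_cons]; exact hl0)
              (by rwa [List.cons_append] at hbr)).elim (hm l0 hl0).1 (hm l0 hl0).2)
          simp only [List.cons_append] at ha hb ⊢
          rw [swapFun_eq_not f p ha, swapFun_eq_not f p hb]
          exact Or.inl ⟨_, m, a, b, hab, rfl, rfl⟩
    · have ha : ¬ IsBr i j p (⟨m, a⟩ :: r) := fun hbr => h1 (isBr_cons_ex p hbr)
      have hb : ¬ IsBr i j p (⟨m, b⟩ :: r) := fun hbr => h1 (isBr_cons_ex p hbr)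
      rw [swapFun_eq_not f p ha, swapFun_eq_not f p hb]
      exact Or.inl ⟨r, m, a, b, hab, rfl, rfl⟩
  · -- type 2 edge
    by_cases h1 : ∃ q', v = q' ++ p
    · obtain ⟨q', rfl⟩ := h1
      cases q' with
      | nil =>
        simp only [List.nil_append] at hadj ⊢
        have hv : swapFun f p p = p := swapFun_eq_not f p (isBr_nil_q p)
        by_cases hm : m = i ∨ m = j
        · have hw : swapFun f p (⟨m, a⟩ :: p) = [tau f ⟨m, a⟩] ++ p := by
            simpa using swapFun_eq f p [⟨m, a⟩] ⟨m, a⟩ (by simp) hm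
          rw [hv, hw]
          rcases hm with rfl | rfl
          · refine Or.inr ⟨j, f a, ?_, by rw [tau_i, List.singleton_append]⟩
            rw [hbase]
            exact f.map_adj_iff.mpr hadj
          · refine Or.inr ⟨i, f.symm a, ?_, by rw [tau_j f hij, List.singleton_append]⟩
            rw [hbase] at hadj
            simpa using f.symm.map_adj_iff.mpr hadj
        · have hw : ¬ IsBr i j p (⟨m, a⟩ :: p) := fun hbr =>
            hm (isBr_last p (q := [⟨m, a⟩]) (l := ⟨m, a⟩) (by simp) hbr)
          rw [hv, swapFun_eq_not f p hw]
          exact Or.inr ⟨m, a, hadj, rfl⟩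
      | cons c q2 =>
        by_cases hm : ∃ l, (c :: q2).getLast? = some l ∧ (l.1 = i ∨ l.1 = j)
        · obtain ⟨l, hl, hd⟩ := hm
          have hv : swapFun f p ((c :: q2) ++ p) = (c :: q2).map (tau f) ++ p :=
            swapFun_eq f p (c :: q2) l hl hd
          have hw : swapFun f p (⟨m, a⟩ :: (c :: q2) ++ p)
              = tau f ⟨m, a⟩ :: ((c :: q2).map (tau f) ++ p) :=
            swapFun_eq f p (⟨m, a⟩ :: c :: q2) l
              (by rw [List.getLast?_cons_cons]; exact hl) hd
          simp only [List.cons_append] at hv hw ⊢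
          rw [hv, hw]
          have hupd := upd_map_tau (u := u) f hij hbase (c :: q2)
          by_cases hmi : m = i
          · subst hmi
            refine Or.inr ⟨j, f a, ?_, by rw [tau_i]⟩
            rw [hupd, Fv_j]
            exact f.map_adj_iff.mpr hadj
          · by_cases hmj : m = j
            · subst hmj
              refine Or.inr ⟨i, f.symm a, ?_, by rw [tau_j f hij]⟩
              rw [hupd, Fv_i f hij]
              exact f.symm.map_adj_iff.mpr hadj
            · refine Or.inr ⟨m, a, ?_, by rw [tau_o f hmi hmj]⟩
              rw [hupd, Fv_o f hmi hmj]
              exact hadj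
        · push_neg at hm
          obtain ⟨l0, hl0⟩ : ∃ l0, (c :: q2).getLast? = some l0 :=
            ⟨(c :: q2).getLast (by simp), List.getLast?_eq_getLast _⟩
          have hv : ¬ IsBr i j p ((c :: q2) ++ p) := fun hbr =>
            ((isBr_last p hl0 hbr).elim (hm l0 hl0).1 (hm l0 hl0).2)
          have hw : ¬ IsBr i j p (⟨m, a⟩ :: (c :: q2) ++ p) := fun hbr =>
            ((isBr_last p (q := ⟨m, a⟩ :: c :: q2) (l := l0)
              (by rw [List.getLast?_cons_cons]; exact hl0)
              (by rwa [List.cons_append] at hbr)).elim (hm l0 hl0).1 (hm l0 hl0).2)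
          simp only [List.cons_append] at hv hw ⊢
          rw [swapFun_eq_not f p hv, swapFun_eq_not f p hw]
          exact Or.inr ⟨m, a, hadj, rfl⟩
    · have hv : ¬ IsBr i j p v := fun hbr => h1 (by obtain ⟨q, l, heq, _, _⟩ := hbr; exact ⟨q, heq⟩)
      have hw : ¬ IsBr i j p (⟨m, a⟩ :: v) := fun hbr => h1 (isBr_cons_ex p hbr)
      rw [swapFun_eq_not f p hv, swapFun_eq_not f p hw]
      exact Or.inr ⟨m, a, hadj, rfl⟩

lemma adm_swapFun (hij : i ≠ j) (hhead : ∀ b ∈ p.head?, b.1 ≠ i ∧ b.1 ≠ j)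
    (hbase : upd u p j = f (upd u p i)) {w : List (Letter V)} (hw : Adm u w) :
    Adm u (swapFun f p w) := by
  by_cases h : IsBr i j p w
  · obtain ⟨q, l, rfl, hl, hd⟩ := h
    rw [swapFun_eq f p q l hl hd]
    exact adm_swap f p hij hhead hbase q hw
  · rwa [swapFun_eq_not f p h]

lemma adj_swap (hij : i ≠ j) (hhead : ∀ b ∈ p.head?, b.1 ≠ i ∧ b.1 ≠ j)
    (hbase : upd u p j = f (upd u p i)) {v w : Word u}
    (h : (freeProd G u).Adj v w) :
    (freeProd G u).Adj ⟨swapFun f p v.1, adm_swapFun f p hij hhead hbase v.2⟩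
      ⟨swapFun f p w.1, adm_swapFun f p hij hhead hbase w.2⟩ := by
  rw [freeProd, SimpleGraph.fromRel_adj] at h
  refine (SimpleGraph.fromRel_adj (r := fun v w : Word u => Pre G u v.1 w.1) _ _).mpr ?_
  refine ⟨?_, h.2.imp (pre_swap f p hij hbase) (pre_swap f p hij hbase)⟩
  intro hEq
  apply h.1
  have := congrArg Subtype.val hEq
  simp only at this
  have h2 := congrArg (swapFun f p) this
  rw [swapFun_invol f p hij, swapFun_invol f p hij] at h2
  exact Subtype.ext h2

noncomputable def swapIso (hij : i ≠ j) (hhead : ∀ b ∈ p.head?, b.1 ≠ i ∧ b.1 ≠ j)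
    (hbase : upd u p j = f (upd u p i)) : freeProd G u ≃g freeProd G u where
  toFun v := ⟨swapFun f p v.1, adm_swapFun f p hij hhead hbase v.2⟩
  invFun v := ⟨swapFun f p v.1, adm_swapFun f p hij hhead hbase v.2⟩
  left_inv v := Subtype.ext (swapFun_invol f p hij v.1)
  right_inv v := Subtype.ext (swapFun_invol f p hij v.1)
  map_rel_iff' := by
    intro v w
    constructor
    · intro h
      have h2 := adj_swap f p hij hhead hbase h
      refine (congrArg₂ (freeProd G u).Adj ?_ ?_).mpr h2 <;> exact Subtype.ext (swapFun_invol f p hij _).symm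
    · exact adj_swap f p hij hhead hbase


end Swap

lemma pre_len {v w : List (Letter V)} (h : Pre G u v w) :
    w.length = v.length ∨ w.length = v.length + 1 := by
  rcases h with ⟨r, m, a, b, _, rfl, rfl⟩ | ⟨m, a, _, rfl⟩
  · simp
  · simp

lemma walk_len_bound {v w : Word u} (W : (freeProd G u).Walk v w) :
    w.1.length ≤ v.1.length + W.length := by
  induction W with
  | nil => simp
  | @cons x b w h W ih =>
    have hb : b.1.length ≤ x.1.length + 1 := by
      rw [freeProd, SimpleGraph.fromRel_adj] at h
      rcases h.2 with h2 | h2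
      · rcases pre_len h2 with h3 | h3 <;> omega
      · rcases pre_len h2 with h3 | h3 <;> omega
    rw [SimpleGraph.Walk.length_cons]
    omega

lemma liftWalk {m : ι} {w : List (Letter V)} (hw : Adm u w)
    (hhd : ∀ b ∈ w.head?, m ≠ b.1) :
    ∀ {x c : V m} (W : (G m).Walk x c) (hc : c = upd u w m) (hx : x ≠ c),
      (freeProd G u).Reachable ⟨w, hw⟩
        ⟨⟨m, x⟩ :: w, adm_cons hw hhd (hc ▸ hx)⟩ := by
  intro x c W
  induction W with
  | nil => intro _ hx; exact absurd rfl hx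
  | @cons x y _ h W ih =>
    intro hc hx
    subst hc
    by_cases hy : y = upd u w m
    · subst hy
      refine SimpleGraph.Adj.reachable ?_
      refine (SimpleGraph.fromRel_adj (r := fun v w : Word u => Pre G u v.1 w.1) _ _).mpr ?_
      refine ⟨?_, Or.inl (Or.inr ⟨m, x, h.symm, rfl⟩)⟩
      intro hEq
      have := congrArg (fun z => z.1.length) hEq
      simp at this
    · refine (ih rfl hy).trans (SimpleGraph.Adj.reachable ?_)
      refine (SimpleGraph.fromRel_adj (r := fun v w : Word u => Pre G u v.1 w.1) _ _).mpr ?_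
      refine ⟨?_, Or.inl (Or.inl ⟨w, m, y, x, h.symm, rfl, rfl⟩)⟩
      intro hEq
      have h2 := congrArg Subtype.val hEq
      simp only [List.cons.injEq, Sigma.mk.inj_iff, heq_eq_eq, true_and] at h2
      exact h.ne' h2.1

lemma reachable_all (hconn : ∀ m, (G m).Connected) :
    ∀ (w : List (Letter V)) (hw : Adm u w),
      (freeProd G u).Reachable (emptyWord u) ⟨w, hw⟩ := by
  intro w
  induction w with
  | nil => intro hw; exact SimpleGraph.Reachable.refl _
  | cons a w ih =>
    intro hw
    obtain ⟨m, x⟩ := a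
    have hw' : Adm u w := adm_tail hw
    have hhd : ∀ b ∈ w.head?, m ≠ b.1 := (List.isChain_cons.mp hw.1).1
    have hx : x ≠ upd u w m := hw.2 ⟨m, x⟩ w (List.suffix_refl _)
    obtain ⟨W⟩ := ((hconn m).preconnected x (upd u w m))
    exact (ih hw').trans (liftWalk hw' hhd W rfl hx)


lemma adm_nil : Adm u ([] : List (Letter V)) :=
  ⟨List.isChain_nil, by intro a p h; simp at h⟩

noncomputable def padF (u : ∀ m : ι, V m) (hnt : ∀ m, Nontrivial (V m))
    (i l : ι) : ℕ → List (Letter V)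
  | 0 => []
  | t + 1 =>
    ⟨(if t % 2 = 0 then i else l),
      Classical.choose (@exists_ne _ (hnt _)
        (upd u (padF u hnt i l t) (if t % 2 = 0 then i else l)))⟩ :: padF u hnt i l t

lemma padF_length (hnt : ∀ m, Nontrivial (V m)) (i l : ι) (t : ℕ) :
    (padF u hnt i l t).length = t := by
  induction t with
  | zero => rfl
  | succ t ih => simp [padF, ih]

lemma padF_mem (hnt : ∀ m, Nontrivial (V m)) (i l : ι) (t : ℕ) :
    ∀ b ∈ padF u hnt i l t, b.1 = i ∨ b.1 = l := by
  induction t with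
  | zero => intro b hb; simp [padF] at hb
  | succ t ih =>
    intro b hb
    rw [padF, List.mem_cons] at hb
    rcases hb with rfl | hb
    · by_cases h : t % 2 = 0 <;> simp [h]
    · exact ih b hb

lemma padF_head (hnt : ∀ m, Nontrivial (V m)) (i l : ι) (t : ℕ) :
    ∀ b ∈ (padF u hnt i l (t + 1)).head?, b.1 = if t % 2 = 0 then i else l := by
  intro b hb
  rw [padF] at hb
  simp only [List.head?_cons, Option.mem_def, Option.some.injEq] at hb
  rw [← hb]

lemma padF_adm (hnt : ∀ m, Nontrivial (V m)) {i l : ι} (hil : i ≠ l) (t : ℕ) :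
    Adm u (padF u hnt i l t) := by
  induction t with
  | zero => exact adm_nil
  | succ t ih =>
    rw [padF]
    refine adm_cons ih ?_ ?_
    · intro b hb
      cases t with
      | zero => simp [padF] at hb
      | succ s =>
        have hb1 := padF_head hnt i l s b hb
        show (if (s + 1) % 2 = 0 then i else l) ≠ b.1
        rcases Nat.mod_two_eq_zero_or_one s with h | h
        · have hA : ¬ (s + 1) % 2 = 0 := by omega
          rw [hb1, if_pos h, if_neg hA]
          exact hil.symm
        · have hA : ¬ s % 2 = 0 := by omega
          have hB : (s + 1) % 2 = 0 := by omega
          rw [hb1, if_neg hA, if_pos hB]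
          exact hil
    · exact Classical.choose_spec (@exists_ne _ (hnt _) _)

/-- Existence of a suitable deep admissible word `p`. -/
lemma exists_deep_word (hnt : ∀ m, Nontrivial (V m)) {i j l : ι}
    (hij : i ≠ j) (hli : l ≠ i) (hlj : l ≠ j) (f : G i ≃g G j) (k : ℕ) :
    ∃ p : List (Letter V), Adm u p ∧ k ≤ p.length ∧
      (∀ b ∈ p.head?, b.1 ≠ i ∧ b.1 ≠ j) ∧ upd u p j = f (upd u p i) := by
  classical
  set pad := padF u hnt i l (2 * k + 2) with hpad
  have hpadadm : Adm u pad := padF_adm hnt hli.symm _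
  have hpadj : upd u pad j = u j := by
    refine upd_apply_of_not_mem ?_
    intro b hb
    rcases padF_mem hnt i l _ b hb with h | h
    · rw [h]; exact hij
    · rw [h]; exact hlj
  have hpadhead : ∀ b ∈ pad.head?, b.1 = l := by
    intro b hb
    have := padF_head hnt i l (2 * k + 1) b hb
    rwa [if_neg (by omega)] at this
  obtain ⟨x₁, hx₁⟩ := @exists_ne _ (hnt i) (upd u pad i)
  -- the core
  by_cases hcase : f x₁ = u j
  · -- core = [⟨i, x₁⟩]
    set s : List (Letter V) := ⟨i, x₁⟩ :: pad with hs
    have hsadm : Adm u s := by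
      refine adm_cons hpadadm ?_ hx₁
      intro b hb
      rw [hpadhead b hb]
      exact hli.symm
    have hsi : upd u s i = x₁ := by rw [hs, upd_cons, Function.update_self]
    have hsj : upd u s j = f x₁ := by
      rw [hs, upd_cons, Function.update_of_ne hij.symm, hpadj, hcase]
    obtain ⟨z, hz⟩ := @exists_ne _ (hnt l) (upd u s l)
    refine ⟨⟨l, z⟩ :: s, adm_cons hsadm ?_ hz, ?_, ?_, ?_⟩
    · intro b hb
      rw [hs] at hb
      simp only [List.head?_cons, Option.mem_def, Option.some.injEq] at hb
      rw [← hb]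
      exact hli
    · have hlen : pad.length = 2 * k + 2 := by
        rw [hpad]; exact padF_length hnt i l _
      simp only [hs, List.length_cons]
      omega
    · intro b hb
      simp only [List.head?_cons, Option.mem_def, Option.some.injEq] at hb
      rw [← hb]
      exact ⟨hli, hlj⟩
    · rw [upd_cons, Function.update_of_ne hlj.symm, Function.update_of_ne hli.symm,
        hsi, hsj]
  · -- core = [⟨j, f x₁⟩, ⟨i, x₁⟩]
    set s0 : List (Letter V) := ⟨i, x₁⟩ :: pad with hs0
    have hs0adm : Adm u s0 := by
      refine adm_cons hpadadm ?_ hx₁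
      intro b hb
      rw [hpadhead b hb]
      exact hli.symm
    set s : List (Letter V) := ⟨j, f x₁⟩ :: s0 with hs
    have hsadm : Adm u s := by
      refine adm_cons hs0adm ?_ ?_
      · intro b hb
        rw [hs0] at hb
        simp only [List.head?_cons, Option.mem_def, Option.some.injEq] at hb
        rw [← hb]
        exact hij.symm
      · show f x₁ ≠ upd u s0 j
        rw [hs0, upd_cons, Function.update_of_ne hij.symm, hpadj]
        exact hcase
    have hsi : upd u s i = x₁ := by
      rw [hs, upd_cons, Function.update_of_ne hij, hs0, upd_cons, Function.update_self]
    have hsj : upd u s j = f x₁ := by rw [hs, upd_cons, Function.update_self]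
    obtain ⟨z, hz⟩ := @exists_ne _ (hnt l) (upd u s l)
    refine ⟨⟨l, z⟩ :: s, adm_cons hsadm ?_ hz, ?_, ?_, ?_⟩
    · intro b hb
      rw [hs] at hb
      simp only [List.head?_cons, Option.mem_def, Option.some.injEq] at hb
      rw [← hb]
      exact hlj
    · have hlen : pad.length = 2 * k + 2 := by
        rw [hpad]; exact padF_length hnt i l _
      simp only [hs, hs0, List.length_cons]
      omega
    · intro b hb
      simp only [List.head?_cons, Option.mem_def, Option.some.injEq] at hb
      rw [← hb]
      exact ⟨hli, hlj⟩
    · rw [upd_cons, Function.update_of_ne hlj.symm, Function.update_of_ne hli.symm,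
        hsi, hsj]

lemma length_le_dist (hconn : ∀ m, (G m).Connected) (v : Word u) :
    v.1.length ≤ (freeProd G u).dist (emptyWord u) v := by
  obtain ⟨vw, hv⟩ := v
  obtain ⟨W, hW⟩ :=
    (reachable_all hconn vw hv).exists_walk_length_eq_dist
  have hb := walk_len_bound W
  have h0 : (emptyWord u).1.length = 0 := rfl
  omega

end FP

/-- If two factors of a free product of at least three connected graphs
(each with at least two vertices) are isomorphic, then the automorphism
group of the free product is non-discrete: for every `k` there is a
nontrivial automorphism fixing the ball of radius `k` around `∅`
pointwise. -/
theorem stmt18 {n : ℕ} (hn : 3 ≤ n) {V : Fin n → Type} (G : ∀ i, SimpleGraph (V i))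
    (u : ∀ i, V i) (hconn : ∀ i, (G i).Connected) (hnt : ∀ i, Nontrivial (V i))
    (i j : Fin n) (hij : i ≠ j) (hiso : Nonempty (G i ≃g G j)) :
    ∀ k : ℕ, ∃ φ : freeProd G u ≃g freeProd G u,
      (∀ v : Word u, (freeProd G u).dist (emptyWord u) v ≤ k → φ v = v) ∧
      ∃ w : Word u, φ w ≠ w := by
  intro k
  obtain ⟨f⟩ := hiso
  have hex : ∃ l : Fin n, l ≠ i ∧ l ≠ j := by
    by_contra h
    push_neg at h
    have hsub : (Finset.univ : Finset (Fin n)) ⊆ {i, j} := by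
      intro l _
      rcases eq_or_ne l i with rfl | hne
      · simp
      · simp [h l hne]
    have h1 := Finset.card_le_card hsub
    rw [Finset.card_univ, Fintype.card_fin] at h1
    have h2 : ({i, j} : Finset (Fin n)).card ≤ 2 :=
      (Finset.card_insert_le _ _).trans (by simp)
    omega
  obtain ⟨l, hli, hlj⟩ := hex
  obtain ⟨p, hp, hplen, hphead, hpbase⟩ :=
    FP.exists_deep_word (u := u) hnt hij hli hlj f k
  refine ⟨FP.swapIso f p hij hphead hpbase, ?_, ?_⟩
  · intro v hd
    have hlen := FP.length_le_dist hconn v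
    apply Subtype.ext
    show FP.swapFun f p v.1 = v.1
    apply FP.swapFun_eq_not
    rintro ⟨q, lq, heq, hlast, _⟩
    have hq : q ≠ [] := by rintro rfl; simp at hlast
    have hlen2 : v.1.length = q.length + p.length := by rw [heq, List.length_append]
    have hq1 : 1 ≤ q.length := List.length_pos_iff.mpr hq
    omega
  · obtain ⟨x, hx⟩ := @exists_ne _ (hnt i) (upd u p i)
    have hhd : ∀ b ∈ p.head?, (⟨i, x⟩ : Letter V).1 ≠ b.1 := fun b hb hc =>
      (hphead b hb).1 hc.symm
    refine ⟨⟨⟨i, x⟩ :: p, FP.adm_cons hp hhd hx⟩, ?_⟩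
    intro hEq
    have h1 : FP.swapFun f p (⟨i, x⟩ :: p) = FP.tau f ⟨i, x⟩ :: p := by
      simpa using FP.swapFun_eq f p [⟨i, x⟩] ⟨i, x⟩ (by simp) (Or.inl rfl)
    have h2 : FP.swapFun f p (⟨i, x⟩ :: p) = ⟨i, x⟩ :: p := congrArg Subtype.val hEq
    rw [h1, FP.tau_i] at h2
    injection h2 with hh _
    exact hij (congrArg Sigma.fst hh).symm
end
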